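/- arXiv:1405.0096 — 2 statements merged into one kernel-verified Lean document; each statement's English description precedes it below -/
import Mathlib

section
/- Let F = K_{2k}, let 𝓔_k be a perfect matching of F, let H_2 be an r_2-regular graph with r_2 ≥ 2, and let G = G[F,E_k,H_{uv}]. Let ζ, η be the two roots of (x − 2r_2 − 2)(x − m) − 2(m − 2) = 0. Then the multiset σ(Q(G)) consists exactly of: (i) each q ∈ σ(Q(H_{uv})) \ {m−2, ζ, η} with multiplicity k; (ii) the value m + 2k − 4 with multiplicity k; (iii) the two roots of (x − m − 4k + 4)(x − 2r_2 − 2) − 2(m − 2) = 0, each with multiplicity 1; (iv) the two roots of (x − m − 2k + 4)(x − 2r_2 − 2) − 2(m − 2) = 0, each with multiplicity k − 1. -/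
open Matrix BigOperators
open scoped Classical

/-- The adjacency matrix of a simple graph, with entries in `R`. -/
noncomputable def adjMat (R : Type*) [Zero R] [One R] {V : Type*} [Fintype V]
    (G : SimpleGraph V) : Matrix V V R :=
  Matrix.of fun x y => if G.Adj x y then (1 : R) else 0

/-- The degree of a vertex. -/
noncomputable def gdeg {V : Type*} [Fintype V] (G : SimpleGraph V) (x : V) : ℕ :=
  (Finset.univ.filter fun y => G.Adj x y).card

/-- `G` is `r`-regular. -/
def IsReg {V : Type*} [Fintype V] (G : SimpleGraph V) (r : ℕ) : Prop :=
  ∀ x, gdeg G x = r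

/-- The signless Laplacian matrix `Q(G) = D(G) + A(G)`. -/
noncomputable def qMat (R : Type*) [AddMonoidWithOne R] {V : Type*} [Fintype V]
    (G : SimpleGraph V) : Matrix V V R :=
  Matrix.diagonal (fun x => (gdeg G x : R)) + adjMat R G

/-- The adjacency spectrum, as the multiset of real roots (with multiplicity) of the
characteristic polynomial of the (real symmetric) adjacency matrix. -/
noncomputable def aSpec {V : Type*} [Fintype V] (G : SimpleGraph V) : Multiset ℝ :=
  (adjMat ℝ G).charpoly.roots

/-- The signless Laplacian spectrum. -/
noncomputable def qSpec {V : Type*} [Fintype V] (G : SimpleGraph V) : Multiset ℝ :=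
  (qMat ℝ G).charpoly.roots

/-- The `M`-coronal `Γ_M(x) = 1ᵀ (xI − M)⁻¹ 1`, the sum of the entries of `(xI − M)⁻¹`. -/
noncomputable def coronal {n R : Type*} [Fintype n] [DecidableEq n] [Field R]
    (M : Matrix n n R) (x : R) : R :=
  ∑ i, ∑ j, ((x • (1 : Matrix n n R) - M)⁻¹) i j

/-- Embeds a `P × P` matrix as a `V × V` matrix supported on the image of `g`, zero elsewhere.
If the vertices of `V` are ordered listing the image of `g` first, this is `diag(M, 0)`. -/
noncomputable def embedMatrix {P V R : Type*} [Fintype P] [AddCommMonoid R]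
    (g : P → V) (M : Matrix P P R) : Matrix V V R :=
  Matrix.of fun x y => ∑ px : P, ∑ py : P, if x = g px ∧ y = g py then M px py else 0

/-- The graph `H − v` obtained by deleting the vertex `v`. -/
def delVert {W : Type*} (H : SimpleGraph W) (v : W) : SimpleGraph {w : W // w ≠ v} :=
  H.comap Subtype.val

/-- The graph `H − {u,v}` obtained by deleting the two vertices `u, v`. -/
def delVert2 {W : Type*} (H : SimpleGraph W) (u v : W) :
    SimpleGraph {w : W // w ≠ u ∧ w ≠ v} :=
  H.comap Subtype.val

/-- The join `G₁ ∨ G₂` of two vertex-disjoint graphs: their disjoint union together with all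
edges between the two parts. -/
def sgJoin {α β : Type*} (G₁ : SimpleGraph α) (G₂ : SimpleGraph β) : SimpleGraph (α ⊕ β) where
  Adj x y :=
    match x, y with
    | Sum.inl a, Sum.inl b => G₁.Adj a b
    | Sum.inl _, Sum.inr _ => True
    | Sum.inr _, Sum.inl _ => True
    | Sum.inr a, Sum.inr b => G₂.Adj a b
  symm := by
    constructor
    rintro (a | a) (b | b) h
    · exact G₁.symm.symm _ _ h
    · trivial
    · trivial
    · exact G₂.symm.symm _ _ h
  loopless := by
    constructor
    rintro (a | a) h
    · exact G₁.loopless.irrefl a h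
    · exact G₂.loopless.irrefl a h

/-- The graph `G[F, V_k, H_v]` with `k` pockets: take one copy of `F` and `k` disjoint copies
of `H` (with specified vertex `v`), identifying the vertex `v` of the `i`-th copy with the
vertex `f i` of `F`.  The `i`-th copy of `H − v` is carried by `{i} × {w // w ≠ v}`. -/
def pocketGraph {V W : Type*} (F : SimpleGraph V) (H : SimpleGraph W) (v : W)
    {k : ℕ} (f : Fin k ↪ V) : SimpleGraph (V ⊕ (Fin k × {w : W // w ≠ v})) where
  Adj x y :=
    match x, y with
    | Sum.inl a, Sum.inl b => F.Adj a b
    | Sum.inl a, Sum.inr (i, w) => a = f i ∧ H.Adj v w.1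
    | Sum.inr (i, w), Sum.inl a => a = f i ∧ H.Adj v w.1
    | Sum.inr (i, w), Sum.inr (j, w') => i = j ∧ H.Adj w.1 w'.1
  symm := by
    constructor
    rintro (a | ⟨i, w⟩) (b | ⟨j, w'⟩) h
    · exact F.symm.symm _ _ h
    · exact h
    · exact h
    · exact ⟨h.1.symm, H.symm.symm _ _ h.2⟩
  loopless := by
    constructor
    rintro (a | ⟨i, w⟩) h
    · exact F.loopless.irrefl a h
    · exact H.loopless.irrefl _ h.2

/-- The graph `G[F, E_k, H_{uv}]` with `k` edge-pockets: take one copy of `F` and `k` disjoint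
copies of `H` (with specified edge `uv`), pasting the edge `uv` of the `i`-th copy onto the
edge `e_i = (a i)(b i)` of `F` (identifying `u` with `a i` and `v` with `b i`).  The `i`-th
copy of `H − {u,v}` is carried by `{i} × {w // w ≠ u ∧ w ≠ v}`. -/
def edgePocketGraph {V W : Type*} (F : SimpleGraph V) (H : SimpleGraph W) (u v : W)
    {k : ℕ} (a b : Fin k → V) :
    SimpleGraph (V ⊕ (Fin k × {w : W // w ≠ u ∧ w ≠ v})) where
  Adj x y :=
    match x, y with
    | Sum.inl s, Sum.inl t => F.Adj s t
    | Sum.inl s, Sum.inr (i, w) => (s = a i ∧ H.Adj u w.1) ∨ (s = b i ∧ H.Adj v w.1)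
    | Sum.inr (i, w), Sum.inl s => (s = a i ∧ H.Adj u w.1) ∨ (s = b i ∧ H.Adj v w.1)
    | Sum.inr (i, w), Sum.inr (j, w') => i = j ∧ H.Adj w.1 w'.1
  symm := by
    constructor
    rintro (s | ⟨i, w⟩) (t | ⟨j, w'⟩) h
    · exact F.symm.symm _ _ h
    · exact h
    · exact h
    · exact ⟨h.1.symm, H.symm.symm _ _ h.2⟩
  loopless := by
    constructor
    rintro (s | ⟨i, w⟩) h
    · exact F.loopless.irrefl s h
    · exact H.loopless.irrefl _ h.2


open Polynomial

lemma qSpec_eq {V : Type*} [Fintype V] [DecidableEq V] (G : SimpleGraph V) :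
    qSpec G = (qMat ℝ G).charpoly.roots := by
  unfold qSpec
  congr!

lemma eval_charpoly' {n : Type*} [Fintype n] [DecidableEq n] (M : Matrix n n ℝ) (x : ℝ) :
    (M.charpoly).eval x = (x • (1 : Matrix n n ℝ) - M).det := by
  rw [Matrix.charpoly, ← Polynomial.coe_evalRingHom, RingHom.map_det]
  congr 1
  ext i j
  by_cases h : i = j <;>
    simp [h, Matrix.charmatrix_apply_eq, Matrix.charmatrix_apply_ne, Matrix.one_apply]


lemma det_smul_one_add_one {n : Type*} [Fintype n] [DecidableEq n] [Nonempty n] (r s : ℝ)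
    (hr : r ≠ 0) :
    (r • (1 : Matrix n n ℝ) + s • Matrix.of (fun _ _ => (1:ℝ))).det
      = r ^ (Fintype.card n - 1) * (r + s * Fintype.card n) := by
  have h1 : (s • Matrix.of (fun _ _ => (1:ℝ)) : Matrix n n ℝ)
      = r • (Matrix.replicateCol Unit (fun _ => (s/r : ℝ)) * Matrix.replicateRow Unit (fun _ => (1:ℝ))) := by
    ext i j
    simp [Matrix.mul_apply, Matrix.replicateCol, Matrix.replicateRow]
    field_simp
  rw [h1, ← smul_add, Matrix.det_smul, Matrix.det_one_add_replicateCol_mul_replicateRow]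
  have hc : 1 ≤ Fintype.card n := Fintype.card_pos
  have : ((fun _ => (1:ℝ)) : n → ℝ) ⬝ᵥ ((fun _ => (s/r : ℝ)) : n → ℝ) = (Fintype.card n : ℝ) * (s/r) := by
    simp [dotProduct]
  rw [this]
  have : (r:ℝ) ^ Fintype.card n = r ^ (Fintype.card n - 1) * r := by
    rw [← pow_succ, Nat.sub_add_cancel hc]
  rw [this]
  field_simp

lemma gdeg_cast {V : Type*} [Fintype V] (G : SimpleGraph V) (x : V) :
    ((gdeg G x : ℝ)) = ∑ y, adjMat ℝ G x y := by
  simp [gdeg, adjMat, Finset.sum_boole]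

lemma sum_mul_matrix {n : Type*} [Fintype n] (A B : Matrix n n ℝ) (i : n) :
    ∑ j, (A * B) i j = ∑ t, A i t * (∑ j, B t j) := by
  simp only [Matrix.mul_apply]
  rw [Finset.sum_comm]
  simp [Finset.mul_sum]

lemma inv_sum_row {n : Type*} [Fintype n] [DecidableEq n] (M : Matrix n n ℝ) (d x : ℝ)
    (hrow : ∀ i, ∑ j, M i j = d)
    (hdet : (x • (1 : Matrix n n ℝ) - M).det ≠ 0) (hxd : x ≠ d) (i : n) :
    ∑ j, (x • (1 : Matrix n n ℝ) - M)⁻¹ i j = (x - d)⁻¹ := by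
  set D := x • (1 : Matrix n n ℝ) - M with hD
  have hDrow : ∀ i, ∑ j, D i j = x - d := by
    intro i
    have : ∑ j, D i j = (∑ j, (x • (1 : Matrix n n ℝ)) i j) - ∑ j, M i j := by
      simp [hD, Finset.sum_sub_distrib]
    rw [this, hrow]
    simp [Matrix.one_apply, Finset.sum_ite_eq]
  have hU : IsUnit D.det := isUnit_iff_ne_zero.2 hdet
  have h2 : ∑ j, (D⁻¹ * D) i j = 1 := by rw [Matrix.nonsing_inv_mul D hU]; simp [Matrix.one_apply]
  rw [sum_mul_matrix] at h2
  simp only [hDrow, ← Finset.sum_mul] at h2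
  have hxd' : x - d ≠ 0 := sub_ne_zero.2 hxd
  exact eq_inv_of_mul_eq_one_left (by linarith [h2])

lemma inv_sum_col {n : Type*} [Fintype n] [DecidableEq n] (M : Matrix n n ℝ) (d x : ℝ)
    (hcol : ∀ j, ∑ i, M i j = d)
    (hdet : (x • (1 : Matrix n n ℝ) - M).det ≠ 0) (hxd : x ≠ d) (j : n) :
    ∑ i, (x • (1 : Matrix n n ℝ) - M)⁻¹ i j = (x - d)⁻¹ := by
  set D := x • (1 : Matrix n n ℝ) - M with hD
  have hDcol : ∀ j, ∑ i, D i j = x - d := by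
    intro j
    have : ∑ i, D i j = (∑ i, (x • (1 : Matrix n n ℝ)) i j) - ∑ i, M i j := by
      simp [hD, Finset.sum_sub_distrib]
    rw [this, hcol]
    simp [Matrix.one_apply, Finset.sum_ite_eq']
  have hU : IsUnit D.det := isUnit_iff_ne_zero.2 hdet
  have h2 : ∑ i, (D * D⁻¹) i j = 1 := by rw [Matrix.mul_nonsing_inv D hU]; simp [Matrix.one_apply]
  have hswap : ∑ i, (D * D⁻¹) i j = ∑ t, (∑ i, D i t) * D⁻¹ t j := by
    simp only [Matrix.mul_apply]
    rw [Finset.sum_comm]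
    simp [Finset.sum_mul]
  rw [hswap] at h2
  simp only [hDcol, ← Finset.mul_sum] at h2
  have hxd' : x - d ≠ 0 := sub_ne_zero.2 hxd
  exact eq_inv_of_mul_eq_one_left (by linarith [h2])

lemma detH {W : Type*} [Fintype W] [DecidableEq W] (m r₂ : ℕ)
    (hm : Fintype.card W = m) (hm3 : 3 ≤ m)
    (H : SimpleGraph W) (u v : W) (huv : u ≠ v)
    (hdegu : ∀ w : W, w ≠ u → H.Adj u w) (hdegv : ∀ w : W, w ≠ v → H.Adj v w)
    (hreg2 : IsReg (delVert2 H u v) r₂) (x : ℝ)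
    (hdet : (x • (1 : Matrix {w : W // w ≠ u ∧ w ≠ v} {w : W // w ≠ u ∧ w ≠ v} ℝ)
        - (((r₂ : ℝ) + 2) • 1 + adjMat ℝ (delVert2 H u v))).det ≠ 0)
    (hxc : x ≠ 2 * (r₂ : ℝ) + 2) :
    (x • (1 : Matrix W W ℝ) - qMat ℝ H).det * (x - (2 * (r₂ : ℝ) + 2))
      = (x • (1 : Matrix {w : W // w ≠ u ∧ w ≠ v} {w : W // w ≠ u ∧ w ≠ v} ℝ)
        - (((r₂ : ℝ) + 2) • 1 + adjMat ℝ (delVert2 H u v))).det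
        * ((x - ((m : ℝ) - 2)) * ((x - (2 * (r₂ : ℝ) + 2)) * (x - (m : ℝ)) - 2 * ((m : ℝ) - 2))) := by
  set P := {w : W // w ≠ u ∧ w ≠ v} with hP
  set M₂ : Matrix P P ℝ := ((r₂ : ℝ) + 2) • 1 + adjMat ℝ (delVert2 H u v) with hM₂
  set c : ℝ := 2 * (r₂ : ℝ) + 2 with hc
  have hxc' : x - c ≠ 0 := sub_ne_zero.2 hxc
  -- the equivalence
  have hvu : v ≠ u := Ne.symm huv
  set fW : (Fin 2 ⊕ P) → W := Sum.elim (fun ε => if ε = 0 then u else v) Subtype.val with hfW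
  have hfW0 : fW (Sum.inl 0) = u := by simp [hfW]
  have hfW1 : fW (Sum.inl 1) = v := by simp [hfW]
  have hbij : Function.Bijective fW := by
    constructor
    · rintro (ε | t) (ε' | t') h
      · fin_cases ε <;> fin_cases ε' <;> simp_all [hfW]
      · exfalso
        fin_cases ε <;> simp [hfW] at h
        · exact t'.2.1 h.symm
        · exact t'.2.2 h.symm
      · exfalso
        fin_cases ε' <;> simp [hfW] at h
        · exact t.2.1 h
        · exact t.2.2 h
      · simp only [hfW, Sum.elim_inr] at h
        exact congrArg Sum.inr (Subtype.ext h)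
    · intro w
      by_cases h1 : w = u
      · exact ⟨Sum.inl 0, by simp [hfW, h1]⟩
      by_cases h2 : w = v
      · exact ⟨Sum.inl 1, by simp [hfW, h2]⟩
      · exact ⟨Sum.inr ⟨w, ⟨h1, h2⟩⟩, rfl⟩
  set eW : (Fin 2 ⊕ P) ≃ W := Equiv.ofBijective fW hbij with heW
  have heWap : ∀ z, eW z = fW z := fun z => rfl
  -- cardinality of P
  have hcardP : ((Fintype.card P : ℕ) : ℝ) = (m : ℝ) - 2 := by
    have h2 : Fintype.card (Fin 2 ⊕ P) = Fintype.card W := Fintype.card_congr eW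
    simp only [Fintype.card_sum, Fintype.card_fin, hm] at h2
    have : Fintype.card P = m - 2 := by omega
    rw [this]
    have : (2 : ℕ) ≤ m := by omega
    push_cast [Nat.cast_sub this]
    ring
  -- adjacency facts
  have hAuv : H.Adj u v := hdegu v hvu
  have hu : ∀ t : P, H.Adj u t.1 := fun t => hdegu t.1 t.2.1
  have hv : ∀ t : P, H.Adj v t.1 := fun t => hdegv t.1 t.2.2
  -- row sums of H₂ adjacency
  have hsum2 : ∀ w : P, ∑ t : P, adjMat ℝ (delVert2 H u v) w t = (r₂ : ℝ) := by
    intro w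
    have := hreg2 w
    simp only [adjMat, Matrix.of_apply, Finset.sum_boole]
    rw [show (Finset.univ.filter fun t => (delVert2 H u v).Adj w t).card = gdeg (delVert2 H u v) w from rfl, this]
  have hsym2 : ∀ w t : P, adjMat ℝ (delVert2 H u v) w t = adjMat ℝ (delVert2 H u v) t w := by
    intro w t
    simp only [adjMat, Matrix.of_apply]
    rw [SimpleGraph.adj_comm]
  have hcol2 : ∀ t : P, ∑ w : P, adjMat ℝ (delVert2 H u v) w t = (r₂ : ℝ) := by
    intro t
    rw [Finset.sum_congr rfl fun w _ => hsym2 w t]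
    exact hsum2 t
  -- row and column sums of M₂
  have hM₂row : ∀ w : P, ∑ t : P, M₂ w t = c := by
    intro w
    simp only [hM₂, Matrix.add_apply, Matrix.smul_apply, Matrix.one_apply, Finset.sum_add_distrib,
      hsum2, smul_eq_mul, mul_ite, mul_one, mul_zero, Finset.sum_ite_eq]
    simp [hc]
    rw [Finset.sum_eq_single w (fun b _ hb => if_neg (Ne.symm hb)) (fun h => absurd (Finset.mem_univ _) h), if_pos rfl]
    ring
  have hM₂col : ∀ t : P, ∑ w : P, M₂ w t = c := by
    intro t
    simp only [hM₂, Matrix.add_apply, Matrix.smul_apply, Matrix.one_apply, Finset.sum_add_distrib,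
      hcol2, smul_eq_mul, mul_ite, mul_one, mul_zero, Finset.sum_ite_eq']
    simp [hc]
    rw [Finset.sum_eq_single t (fun b _ hb => if_neg hb) (fun h => absurd (Finset.mem_univ _) h), if_pos rfl]
    ring
  -- degree facts
  have hsumW : ∀ (F : W → ℝ), ∑ t, F t = F u + F v + ∑ t : P, F t.1 := by
    intro F
    rw [← Equiv.sum_comp eW F, Fintype.sum_sum_type, Fin.sum_univ_two]
    simp only [heWap, hfW0, hfW1]
    rfl
  have hgu : ((gdeg H u : ℕ) : ℝ) = (m : ℝ) - 1 := by
    rw [gdeg_cast, hsumW]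
    simp only [adjMat, Matrix.of_apply]
    rw [if_neg (H.irrefl), if_pos hAuv]
    have : ∀ t : P, (if H.Adj u t.1 then (1:ℝ) else 0) = 1 := fun t => if_pos (hu t)
    rw [Finset.sum_congr rfl fun t _ => this t]
    simp [hcardP]
    ring
  have hgv : ((gdeg H v : ℕ) : ℝ) = (m : ℝ) - 1 := by
    rw [gdeg_cast, hsumW]
    simp only [adjMat, Matrix.of_apply]
    rw [if_pos hAuv.symm, if_neg (H.irrefl)]
    have : ∀ t : P, (if H.Adj v t.1 then (1:ℝ) else 0) = 1 := fun t => if_pos (hv t)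
    rw [Finset.sum_congr rfl fun t _ => this t]
    simp [hcardP]
    ring
  have hgP : ∀ w : P, ((gdeg H w.1 : ℕ) : ℝ) = (r₂ : ℝ) + 2 := by
    intro w
    rw [gdeg_cast, hsumW]
    simp only [adjMat, Matrix.of_apply]
    rw [if_pos (hu w).symm, if_pos (hv w).symm]
    have : ∀ t : P, (if H.Adj w.1 t.1 then (1:ℝ) else 0) = adjMat ℝ (delVert2 H u v) w t := by
      intro t; simp [adjMat, delVert2]
    rw [Finset.sum_congr rfl fun t _ => this t, hsum2]
    ring
  -- entry formula
  have hentry : ∀ s t : W, (x • (1 : Matrix W W ℝ) - qMat ℝ H) s t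
      = (if s = t then x - ((gdeg H s : ℕ) : ℝ) else 0) - adjMat ℝ H s t := by
    intro s t
    by_cases h : s = t
    · subst h
      simp [qMat, Matrix.one_apply]
      ring
    · simp [qMat, Matrix.one_apply, h, Matrix.diagonal_apply_ne _ h]
  set R : Matrix P P ℝ := (x • (1 : Matrix P P ℝ) - M₂)⁻¹ with hR
  have hdetre : (x • (1 : Matrix W W ℝ) - qMat ℝ H).det
      = (Matrix.reindex eW.symm eW.symm (x • (1 : Matrix W W ℝ) - qMat ℝ H)).det :=
    (Matrix.det_reindex_self _ _).symm
  set A₀ : Matrix (Fin 2) (Fin 2) ℝ :=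
    Matrix.of fun ε ε' => if ε = ε' then x - ((m : ℝ) - 1) else (-1 : ℝ) with hA₀
  set B₀ : Matrix (Fin 2) P ℝ := Matrix.of fun _ _ => (-1 : ℝ) with hB₀
  set C₀ : Matrix P (Fin 2) ℝ := Matrix.of fun _ _ => (-1 : ℝ) with hC₀
  have hgeq : ∀ ε ε' : Fin 2, (fW (Sum.inl ε) = fW (Sum.inl ε')) ↔ ε = ε' := by
    simp only [Fin.forall_fin_two]
    refine ⟨⟨?_, ?_⟩, ?_, ?_⟩ <;> simp [hfW, huv, hvu]
  have hgdeg2 : ∀ ε : Fin 2, ((gdeg H (fW (Sum.inl ε)) : ℕ) : ℝ) = (m : ℝ) - 1 := by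
    simp only [Fin.forall_fin_two]
    constructor <;> simp [hfW, hgu, hgv]
  have hadj2 : ∀ ε ε' : Fin 2, adjMat ℝ H (fW (Sum.inl ε)) (fW (Sum.inl ε'))
      = if ε = ε' then 0 else 1 := by
    simp only [Fin.forall_fin_two]
    refine ⟨⟨?_, ?_⟩, ?_, ?_⟩ <;> simp [hfW, adjMat, hAuv, hAuv.symm, H.irrefl]
  have hne1 : ∀ (ε : Fin 2) (t : P), fW (Sum.inl ε) ≠ t.1 := by
    simp only [Fin.forall_fin_two]
    constructor <;> intro t <;> simp [hfW]
    · exact fun hh => t.2.1 hh.symm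
    · exact fun hh => t.2.2 hh.symm
  have hadjP : ∀ (ε : Fin 2) (t : P), adjMat ℝ H (fW (Sum.inl ε)) t.1 = 1 := by
    simp only [Fin.forall_fin_two]
    constructor <;> intro t <;> simp [hfW, adjMat, hu t, hv t]
  have hadjP' : ∀ (ε : Fin 2) (t : P), adjMat ℝ H t.1 (fW (Sum.inl ε)) = 1 := by
    simp only [Fin.forall_fin_two]
    constructor <;> intro t <;> simp [hfW, adjMat, (hu t).symm, (hv t).symm]
  have hblock : Matrix.reindex eW.symm eW.symm (x • (1 : Matrix W W ℝ) - qMat ℝ H)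
      = Matrix.fromBlocks A₀ B₀ C₀ (x • (1 : Matrix P P ℝ) - M₂) := by
    ext z y
    rcases z with ε | t <;> rcases y with ε' | t' <;>
      simp only [Matrix.reindex_apply, Matrix.submatrix_apply, Equiv.symm_symm, heWap, hentry,
        Matrix.fromBlocks_apply₁₁, Matrix.fromBlocks_apply₁₂, Matrix.fromBlocks_apply₂₁,
        Matrix.fromBlocks_apply₂₂]
    · rw [hadj2, hgdeg2]
      by_cases h : ε = ε'
      · subst h
        rw [if_pos rfl]
        simp [hA₀]
      · rw [if_neg (fun hh => h ((hgeq ε ε').1 hh))]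
        simp [hA₀, h]
    · rw [show fW (Sum.inr t') = t'.1 from rfl, if_neg (hne1 ε t'), hadjP]
      simp [hB₀]
    · rw [show fW (Sum.inr t) = t.1 from rfl, if_neg fun hh => (hne1 ε' t) hh.symm, hadjP']
      simp [hC₀]
    · show _ = (x • (1 : Matrix P P ℝ) - M₂) t t'
      by_cases h : t = t'
      · subst h
        rw [show fW (Sum.inr t) = t.1 from rfl, if_pos rfl, hgP t]
        simp [hM₂, Matrix.one_apply, adjMat]
      · rw [show fW (Sum.inr t) = t.1 from rfl, show fW (Sum.inr t') = t'.1 from rfl,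
          if_neg (fun hh => h (Subtype.ext hh))]
        simp [hM₂, Matrix.one_apply, adjMat, delVert2, h, Subtype.ext_iff]
  haveI hInv : Invertible (x • (1 : Matrix P P ℝ) - M₂) :=
    (x • (1 : Matrix P P ℝ) - M₂).invertibleOfIsUnitDet (isUnit_iff_ne_zero.2 hdet)
  have hdetH : (x • (1 : Matrix W W ℝ) - qMat ℝ H).det
      = (x • (1 : Matrix P P ℝ) - M₂).det * (A₀ - B₀ * R * C₀).det := by
    rw [hdetre, hblock, Matrix.det_fromBlocks₂₂]
    congr 3
    rw [hR, Matrix.invOf_eq_nonsing_inv]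
  have hRcol := inv_sum_col M₂ c x hM₂col hdet hxc
  have hSchur : (B₀ * R * C₀) = Matrix.of fun _ _ : Fin 2 => ((m : ℝ) - 2) * (x - c)⁻¹ := by
    ext ε ε'
    have h1 : ∀ t : P, (B₀ * R) ε t = -((x - c)⁻¹) := by
      intro t
      rw [Matrix.mul_apply]
      simp only [hB₀, Matrix.of_apply, neg_one_mul, Finset.sum_neg_distrib]
      rw [hRcol t]
    rw [Matrix.mul_apply]
    simp only [h1, hC₀, Matrix.of_apply, mul_neg, neg_neg, mul_one, Finset.sum_const,
      nsmul_eq_mul]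
    rw [Finset.card_univ, hcardP]
  have hSdet : (A₀ - B₀ * R * C₀).det
      = (x - ((m : ℝ) - 1) - ((m : ℝ) - 2) * (x - c)⁻¹) * (x - ((m : ℝ) - 1) - ((m : ℝ) - 2) * (x - c)⁻¹)
        - (-1 - ((m : ℝ) - 2) * (x - c)⁻¹) * (-1 - ((m : ℝ) - 2) * (x - c)⁻¹) := by
    rw [hSchur, Matrix.det_fin_two]
    norm_num [hA₀]
  rw [hdetH, hSdet]
  field_simp
  ring

lemma hexp_aux (k : ℕ) (hk : 1 ≤ k) (α β K : ℝ) :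
    ((2 * β) ^ (k - 1) * (2 * β + (-4) * K)) * (2 * α) ^ k
      = (α ^ k * (β ^ (k - 1) * (β - 2 * K))) * (2 ^ k * 2 ^ k) := by
  obtain ⟨k', rfl⟩ : ∃ k', k = k' + 1 := ⟨k - 1, by omega⟩
  simp only [Nat.add_sub_cancel]
  ring

lemma final_aux (k : ℕ) (hk : 1 ≤ k) (d α β K xc : ℝ) :
    d ^ k * (α ^ k * (β ^ (k - 1) * (β - 2 * K))) * xc ^ k
      = d ^ k * (α ^ k * ((β - 2 * K) * xc) * (β * xc) ^ (k - 1)) := by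
  obtain ⟨k', rfl⟩ : ∃ k', k = k' + 1 := ⟨k - 1, by omega⟩
  simp only [Nat.add_sub_cancel]
  ring

lemma detG {W : Type*} [Fintype W] [DecidableEq W] (m k r₂ : ℕ) (hk : 1 ≤ k)
    (hm : Fintype.card W = m) (hm3 : 3 ≤ m)
    (H : SimpleGraph W) (u v : W) (huv : u ≠ v)
    (hdegu : ∀ w : W, w ≠ u → H.Adj u w) (hdegv : ∀ w : W, w ≠ v → H.Adj v w)
    (hreg2 : IsReg (delVert2 H u v) r₂)
    (a b : Fin k → Fin (2 * k))
    (hmatching : Function.Injective (Sum.elim a b : Fin k ⊕ Fin k → Fin (2 * k)))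
    (x : ℝ)
    (hdet : (x • (1 : Matrix {w : W // w ≠ u ∧ w ≠ v} {w : W // w ≠ u ∧ w ≠ v} ℝ)
        - (((r₂ : ℝ) + 2) • 1 + adjMat ℝ (delVert2 H u v))).det ≠ 0)
    (hxc : x ≠ 2 * (r₂ : ℝ) + 2)
    (hxτ : (x - ((m : ℝ) + 2 * (k : ℝ) - 4)) * (x - (2 * (r₂ : ℝ) + 2)) - 2 * ((m : ℝ) - 2) ≠ 0) :
    (x • 1 - qMat ℝ (edgePocketGraph (⊤ : SimpleGraph (Fin (2 * k))) H u v a b)).det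
        * (x - (2 * (r₂ : ℝ) + 2)) ^ k
      = (x • (1 : Matrix {w : W // w ≠ u ∧ w ≠ v} {w : W // w ≠ u ∧ w ≠ v} ℝ)
          - (((r₂ : ℝ) + 2) • 1 + adjMat ℝ (delVert2 H u v))).det ^ k
        * ((x - ((m : ℝ) + 2 * (k : ℝ) - 4)) ^ k
          * ((x - ((m : ℝ) + 4 * (k : ℝ) - 4)) * (x - (2 * (r₂ : ℝ) + 2)) - 2 * ((m : ℝ) - 2))
          * ((x - ((m : ℝ) + 2 * (k : ℝ) - 4)) * (x - (2 * (r₂ : ℝ) + 2)) - 2 * ((m : ℝ) - 2)) ^ (k - 1)) := by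
  set P := {w : W // w ≠ u ∧ w ≠ v} with hP
  set M₂ : Matrix P P ℝ := ((r₂ : ℝ) + 2) • 1 + adjMat ℝ (delVert2 H u v) with hM₂
  set c : ℝ := 2 * (r₂ : ℝ) + 2 with hc
  have hxc' : x - c ≠ 0 := sub_ne_zero.2 hxc
  have hvu : v ≠ u := Ne.symm huv
  have hu : ∀ t : P, H.Adj u t.1 := fun t => hdegu t.1 t.2.1
  have hv : ∀ t : P, H.Adj v t.1 := fun t => hdegv t.1 t.2.2
  -- cardinality of P
  have hcardPn : Fintype.card P = m - 2 := by
    rw [Fintype.card_subtype]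
    have he : (Finset.univ.filter fun w : W => w ≠ u ∧ w ≠ v)
        = (Finset.univ.erase u).erase v := by
      ext w
      simp [Finset.mem_erase, and_comm]
    rw [he, Finset.card_erase_of_mem (Finset.mem_erase.2 ⟨hvu, Finset.mem_univ v⟩),
      Finset.card_erase_of_mem (Finset.mem_univ u), Finset.card_univ, hm]
    omega
  have hcardP : ((Fintype.card P : ℕ) : ℝ) = (m : ℝ) - 2 := by
    rw [hcardPn, Nat.cast_sub (by omega : 2 ≤ m)]
    norm_num
  -- row and column sums of H₂ adjacency
  have hsum2 : ∀ w : P, ∑ t : P, adjMat ℝ (delVert2 H u v) w t = (r₂ : ℝ) := by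
    intro w
    have := hreg2 w
    simp only [adjMat, Matrix.of_apply, Finset.sum_boole]
    rw [show (Finset.univ.filter fun t => (delVert2 H u v).Adj w t).card
      = gdeg (delVert2 H u v) w from rfl, this]
  have hsym2 : ∀ w t : P, adjMat ℝ (delVert2 H u v) w t = adjMat ℝ (delVert2 H u v) t w := by
    intro w t
    simp only [adjMat, Matrix.of_apply]
    rw [SimpleGraph.adj_comm]
  have hcol2 : ∀ t : P, ∑ w : P, adjMat ℝ (delVert2 H u v) w t = (r₂ : ℝ) := by
    intro t
    rw [Finset.sum_congr rfl fun w _ => hsym2 w t]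
    exact hsum2 t
  have hM₂col : ∀ t : P, ∑ w : P, M₂ w t = c := by
    intro t
    simp only [hM₂, Matrix.add_apply, Matrix.smul_apply, Matrix.one_apply, Finset.sum_add_distrib,
      hcol2, smul_eq_mul, mul_ite, mul_one, mul_zero, Finset.sum_ite_eq']
    simp [hc]
    rw [Finset.sum_eq_single t (fun b _ hb => if_neg hb) (fun h => absurd (Finset.mem_univ _) h), if_pos rfl]
    ring
  have hsum2' : ∀ w : P, ∑ t : P, (if H.Adj w.1 t.1 then (1:ℝ) else 0) = (r₂ : ℝ) := by
    intro w
    rw [← hsum2 w]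
    rfl
  -- the pasting bijection
  have hcard2k : Fintype.card (Fin k ⊕ Fin k) = Fintype.card (Fin (2 * k)) := by
    simp [two_mul]
  have hbijφ : Function.Bijective (Sum.elim a b : Fin k ⊕ Fin k → Fin (2 * k)) :=
    (Fintype.bijective_iff_injective_and_card _).2 ⟨hmatching, hcard2k⟩
  set φ : (Fin k ⊕ Fin k) ≃ Fin (2 * k) := Equiv.ofBijective _ hbijφ with hφ
  have hφa : ∀ i, φ (Sum.inl i) = a i := fun i => rfl
  have hφb : ∀ i, φ (Sum.inr i) = b i := fun i => rfl
  have hab : ∀ i j, a i ≠ b j := by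
    intro i j h
    have := hmatching (show Sum.elim a b (Sum.inl i) = Sum.elim a b (Sum.inr j) from h)
    simp at this
  have haa : ∀ i j, a i = a j ↔ i = j := by
    intro i j
    constructor
    · intro h
      have := hmatching (show Sum.elim a b (Sum.inl i) = Sum.elim a b (Sum.inl j) from h)
      simpa using this
    · intro h; rw [h]
  have hbb : ∀ i j, b i = b j ↔ i = j := by
    intro i j
    constructor
    · intro h
      have := hmatching (show Sum.elim a b (Sum.inr i) = Sum.elim a b (Sum.inr j) from h)
      simpa using this
    · intro h; rw [h]
  set G := edgePocketGraph (⊤ : SimpleGraph (Fin (2 * k))) H u v a b with hGdef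
  -- adjacency facts
  have hadjFF : ∀ s t : Fin (2 * k), G.Adj (Sum.inl s) (Sum.inl t) ↔ s ≠ t := by
    intro s t
    change (⊤ : SimpleGraph (Fin (2 * k))).Adj s t ↔ _
    simp
  have hadjX : ∀ (s : Fin (2 * k)) (j : Fin k) (w : P),
      G.Adj (Sum.inl s) (Sum.inr (j, w)) ↔ (s = a j ∨ s = b j) := by
    intro s j w
    change (s = a j ∧ H.Adj u w.1) ∨ (s = b j ∧ H.Adj v w.1) ↔ _
    constructor
    · rintro (⟨h, -⟩ | ⟨h, -⟩)
      exacts [Or.inl h, Or.inr h]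
    · rintro (h | h)
      exacts [Or.inl ⟨h, hu w⟩, Or.inr ⟨h, hv w⟩]
  have hadjX' : ∀ (s : Fin (2 * k)) (j : Fin k) (w : P),
      G.Adj (Sum.inr (j, w)) (Sum.inl s) ↔ (s = a j ∨ s = b j) := by
    intro s j w
    change (s = a j ∧ H.Adj u w.1) ∨ (s = b j ∧ H.Adj v w.1) ↔ _
    constructor
    · rintro (⟨h, -⟩ | ⟨h, -⟩)
      exacts [Or.inl h, Or.inr h]
    · rintro (h | h)
      exacts [Or.inl ⟨h, hu w⟩, Or.inr ⟨h, hv w⟩]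
  have hadjPP : ∀ (i j : Fin k) (w w' : P),
      G.Adj (Sum.inr (i, w)) (Sum.inr (j, w')) ↔ (i = j ∧ H.Adj w.1 w'.1) := by
    intro i j w w'
    exact Iff.rfl
  -- sum decomposition over the vertex type
  have hsumV : ∀ (F : (Fin (2 * k) ⊕ (Fin k × P)) → ℝ),
      ∑ z, F z = (∑ s : Fin (2 * k), F (Sum.inl s)) + ∑ j : Fin k, ∑ w : P, F (Sum.inr (j, w)) := by
    intro F
    rw [Fintype.sum_sum_type, Fintype.sum_prod_type]
  -- degrees
  have hdegF : ∀ s : Fin (2 * k), ((gdeg G (Sum.inl s) : ℕ) : ℝ) = (m : ℝ) + 2 * (k : ℝ) - 3 := by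
    intro s
    rw [gdeg_cast, hsumV]
    have h1 : ∑ t : Fin (2 * k), adjMat ℝ G (Sum.inl s) (Sum.inl t) = 2 * (k : ℝ) - 1 := by
      have hp : ∀ t, adjMat ℝ G (Sum.inl s) (Sum.inl t) = 1 - (if s = t then (1:ℝ) else 0) := by
        intro t
        by_cases h : s = t <;> simp [adjMat, hadjFF, h]
      rw [Finset.sum_congr rfl fun t _ => hp t, Finset.sum_sub_distrib]
      simp [Finset.sum_ite_eq, Finset.card_univ]
      try push_cast
      try ring
    have h2 : ∀ j : Fin k, ∑ w : P, adjMat ℝ G (Sum.inl s) (Sum.inr (j, w))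
        = (if s = a j ∨ s = b j then (m : ℝ) - 2 else 0) := by
      intro j
      by_cases h : s = a j ∨ s = b j <;>
        simp [adjMat, hadjX, h, Finset.card_univ, hcardP]
    have h3 : ∑ j, (if s = a j ∨ s = b j then (m : ℝ) - 2 else 0) = (m : ℝ) - 2 := by
      obtain ⟨z, rfl⟩ := φ.surjective s
      rcases z with i | i
      · have hcond : ∀ j, (φ (Sum.inl i) = a j ∨ φ (Sum.inl i) = b j) = (j = i) := by
          intro j
          rw [hφa]
          refine propext ⟨?_, ?_⟩
          · rintro (h | h)
            · exact ((haa i j).1 h).symm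
            · exact absurd h (hab i j)
          · intro h; exact Or.inl (by rw [h])
        simp_rw [hcond]
        simp
      · have hcond : ∀ j, (φ (Sum.inr i) = a j ∨ φ (Sum.inr i) = b j) = (j = i) := by
          intro j
          rw [hφb]
          refine propext ⟨?_, ?_⟩
          · rintro (h | h)
            · exact absurd h.symm (hab j i)
            · exact ((hbb i j).1 h).symm
          · intro h; exact Or.inr (by rw [h])
        simp_rw [hcond]
        simp
    rw [h1, Finset.sum_congr rfl fun j _ => h2 j, h3]
    try ring
  have hdegP : ∀ (i : Fin k) (w : P),
      ((gdeg G (Sum.inr (i, w)) : ℕ) : ℝ) = (r₂ : ℝ) + 2 := by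
    intro i w
    rw [gdeg_cast, hsumV]
    have h1 : ∑ t : Fin (2 * k), adjMat ℝ G (Sum.inr (i, w)) (Sum.inl t) = 2 := by
      have hp : ∀ t, adjMat ℝ G (Sum.inr (i, w)) (Sum.inl t)
          = (if t = a i then (1:ℝ) else 0) + (if t = b i then 1 else 0) := by
        intro t
        by_cases h1 : t = a i <;> by_cases h2 : t = b i
        · exact absurd (h1.symm.trans h2) (hab i i)
        all_goals simp [adjMat, hadjX', h1, h2, hab i i, Ne.symm (hab i i)]
      rw [Finset.sum_congr rfl fun t _ => hp t, Finset.sum_add_distrib]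
      simp [Finset.sum_ite_eq']
      norm_num
    have h2 : ∑ j : Fin k, ∑ w' : P, adjMat ℝ G (Sum.inr (i, w)) (Sum.inr (j, w')) = (r₂ : ℝ) := by
      have hval : ∀ (j : Fin k) (w' : P), adjMat ℝ G (Sum.inr (i, w)) (Sum.inr (j, w'))
          = if i = j then (if H.Adj w.1 w'.1 then (1:ℝ) else 0) else 0 := by
        intro j w'
        by_cases h : i = j <;> simp [adjMat, hadjPP, h]
      have hinner : ∀ j : Fin k, ∑ w' : P, adjMat ℝ G (Sum.inr (i, w)) (Sum.inr (j, w'))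
          = if i = j then (r₂ : ℝ) else 0 := by
        intro j
        rw [Finset.sum_congr rfl fun w' _ => hval j w']
        by_cases h : i = j
        · simp only [h, if_true]
          exact hsum2' w
        · simp [h]
      rw [Finset.sum_congr rfl fun j _ => hinner j]
      simp
    rw [h1, h2]
    ring
  -- entry formula
  have hMent : ∀ z y : Fin (2 * k) ⊕ (Fin k × P),
      (x • (1 : Matrix (Fin (2 * k) ⊕ (Fin k × P)) (Fin (2 * k) ⊕ (Fin k × P)) ℝ)
        - qMat ℝ G) z y
        = (if z = y then x - ((gdeg G z : ℕ) : ℝ) else 0) - adjMat ℝ G z y := by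
    intro z y
    by_cases h : z = y
    · subst h
      simp [qMat, Matrix.one_apply]
      ring
    · simp [qMat, Matrix.one_apply, h, Matrix.diagonal_apply_ne _ h]
  set α : ℝ := x - ((m : ℝ) + 2 * (k : ℝ) - 4) with hα
  set γ : ℝ := ((m : ℝ) - 2) * (x - c)⁻¹ with hγ
  set ix : Fin k ⊕ Fin k → Fin k := Sum.elim id id with hix
  set FF : Matrix (Fin k ⊕ Fin k) (Fin k ⊕ Fin k) ℝ :=
    Matrix.of (fun z y => (if z = y then α else 0) - 1) with hFF
  set BB : Matrix (Fin k ⊕ Fin k) (Fin k × P) ℝ :=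
    Matrix.of (fun z p => -(if ix z = p.1 then (1:ℝ) else 0)) with hBB
  set CC : Matrix (Fin k × P) (Fin k ⊕ Fin k) ℝ :=
    Matrix.of (fun p y => -(if ix y = p.1 then (1:ℝ) else 0)) with hCC
  set DD : Matrix (Fin k × P) (Fin k × P) ℝ :=
    Matrix.of (fun p q => if p.1 = q.1 then (x • (1 : Matrix P P ℝ) - M₂) p.2 q.2 else 0) with hDD
  set e : ((Fin k ⊕ Fin k) ⊕ (Fin k × P)) ≃ (Fin (2 * k) ⊕ (Fin k × P)) :=
    Equiv.sumCongr φ (Equiv.refl _) with he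
  have heinl : ∀ z : Fin k ⊕ Fin k, e (Sum.inl z) = Sum.inl (φ z) := fun z => rfl
  have heinr : ∀ p : Fin k × P, e (Sum.inr p) = Sum.inr p := fun p => rfl
  have hcross : ∀ (z : Fin k ⊕ Fin k) (j : Fin k), (φ z = a j ∨ φ z = b j) ↔ ix z = j := by
    rintro (i | i) j <;> simp only [hix, Sum.elim_inl, Sum.elim_inr, id_eq, hφa, hφb]
    · constructor
      · rintro (h | h)
        · exact (haa i j).1 h
        · exact absurd h (hab i j)
      · intro h; exact Or.inl (congrArg a h)
    · constructor
      · rintro (h | h)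
        · exact absurd h.symm (hab j i)
        · exact (hbb i j).1 h
      · intro h; exact Or.inr (congrArg b h)
  have hblock : Matrix.reindex e.symm e.symm
      (x • (1 : Matrix (Fin (2 * k) ⊕ (Fin k × P)) (Fin (2 * k) ⊕ (Fin k × P)) ℝ) - qMat ℝ G)
      = Matrix.fromBlocks FF BB CC DD := by
    ext z y
    rcases z with z | p <;> rcases y with y | q <;>
      simp only [Matrix.reindex_apply, Matrix.submatrix_apply, Equiv.symm_symm,
        Matrix.fromBlocks_apply₁₁, Matrix.fromBlocks_apply₁₂, Matrix.fromBlocks_apply₂₁,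
        Matrix.fromBlocks_apply₂₂, heinl, heinr, hMent]
    · rw [hdegF]
      by_cases h : z = y
      · subst h
        rw [if_pos rfl]
        have hz : adjMat ℝ G (Sum.inl (φ z)) (Sum.inl (φ z)) = 0 := by
          simp [adjMat, hadjFF]
        rw [hz]
        simp only [hFF, Matrix.of_apply, if_pos rfl, hα, if_true, eq_self_iff_true]
        ring
      · have hφne : (Sum.inl (φ z) : Fin (2 * k) ⊕ (Fin k × P)) ≠ Sum.inl (φ y) := by
          simp [φ.injective.ne h]
        rw [if_neg hφne]
        have hz : adjMat ℝ G (Sum.inl (φ z)) (Sum.inl (φ y)) = 1 := by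
          simp [adjMat, hadjFF, φ.injective.ne h]
        rw [hz]
        simp [hFF, h]
    · obtain ⟨j, w⟩ := q
      rw [if_neg (by simp : (Sum.inl (φ z) : Fin (2 * k) ⊕ (Fin k × P)) ≠ Sum.inr (j, w))]
      have hz : adjMat ℝ G (Sum.inl (φ z)) (Sum.inr (j, w)) = if ix z = j then 1 else 0 := by
        simp only [adjMat, Matrix.of_apply]
        by_cases h : ix z = j
        · rw [if_pos ((hadjX _ j w).2 ((hcross z j).2 h)), if_pos h]
        · rw [if_neg (fun hh => h ((hcross z j).1 ((hadjX _ j w).1 hh))), if_neg h]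
      rw [hz]
      simp [hBB]
    · obtain ⟨j, w⟩ := p
      rw [if_neg (by simp : (Sum.inr (j, w) : Fin (2 * k) ⊕ (Fin k × P)) ≠ Sum.inl (φ y))]
      have hz : adjMat ℝ G (Sum.inr (j, w)) (Sum.inl (φ y)) = if ix y = j then 1 else 0 := by
        simp only [adjMat, Matrix.of_apply]
        by_cases h : ix y = j
        · rw [if_pos ((hadjX' _ j w).2 ((hcross y j).2 h)), if_pos h]
        · rw [if_neg (fun hh => h ((hcross y j).1 ((hadjX' _ j w).1 hh))), if_neg h]
      rw [hz]
      simp [hCC]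
    · obtain ⟨i, w⟩ := p
      obtain ⟨j, w'⟩ := q
      have hadv : adjMat ℝ G (Sum.inr (i, w)) (Sum.inr (j, w'))
          = if i = j then (if H.Adj w.1 w'.1 then (1:ℝ) else 0) else 0 := by
        by_cases h : i = j <;> simp [adjMat, hadjPP, h]
      rw [hdegP, hadv]
      by_cases hij : i = j
      · subst hij
        by_cases hww : w = w'
        · subst hww
          rw [if_pos rfl]
          simp [hDD, hM₂, Matrix.one_apply, adjMat, delVert2]
        · rw [if_neg (by simp [hww] :
            (Sum.inr (i, w) : Fin (2 * k) ⊕ (Fin k × P)) ≠ Sum.inr (i, w'))]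
          simp [hDD, hM₂, Matrix.one_apply, adjMat, delVert2, hww]
      · rw [if_neg (by simp [hij] :
          (Sum.inr (i, w) : Fin (2 * k) ⊕ (Fin k × P)) ≠ Sum.inr (j, w'))]
        simp [hDD, hij]
  -- inverse of DD
  set R : Matrix P P ℝ := (x • (1 : Matrix P P ℝ) - M₂)⁻¹ with hR
  have hUdet : IsUnit (x • (1 : Matrix P P ℝ) - M₂).det := isUnit_iff_ne_zero.2 hdet
  set EE : Matrix (Fin k × P) (Fin k × P) ℝ :=
    Matrix.of (fun p q => if p.1 = q.1 then R p.2 q.2 else 0) with hEE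
  have honep : ∀ p q : Fin k × P, (1 : Matrix (Fin k × P) (Fin k × P) ℝ) p q
      = if p.1 = q.1 then (1 : Matrix P P ℝ) p.2 q.2 else 0 := by
    intro p q
    by_cases h : p = q
    · subst h; simp [Matrix.one_apply]
    · rw [Matrix.one_apply_ne h]
      by_cases h1 : p.1 = q.1
      · have h2 : p.2 ≠ q.2 := fun hh => h (Prod.ext h1 hh)
        simp [h1, Matrix.one_apply_ne h2]
      · simp [h1]
  have hprodmul : ∀ (X Y : Matrix P P ℝ) (p q : Fin k × P),
      ((Matrix.of (fun p q : Fin k × P => if p.1 = q.1 then X p.2 q.2 else 0) :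
          Matrix (Fin k × P) (Fin k × P) ℝ)
        * Matrix.of (fun p q : Fin k × P => if p.1 = q.1 then Y p.2 q.2 else 0)) p q
      = if p.1 = q.1 then (X * Y) p.2 q.2 else 0 := by
    intro X Y p q
    rw [Matrix.mul_apply, Fintype.sum_prod_type]
    rw [Finset.sum_eq_single p.1]
    · simp only [Matrix.of_apply, if_pos rfl]
      by_cases h : p.1 = q.1
      · simp [h, Matrix.mul_apply]
      · simp [h]
    · intro l _ hl
      simp [Matrix.of_apply, Ne.symm hl]
    · intro h; exact absurd (Finset.mem_univ _) h
  have hDDEE : DD * EE = 1 := by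
    ext p q
    rw [hDD, hEE, hprodmul, Matrix.mul_nonsing_inv _ hUdet, honep]
  have hEEDD : EE * DD = 1 := by
    ext p q
    rw [hDD, hEE, hprodmul, Matrix.nonsing_inv_mul _ hUdet, honep]
  haveI hInvDD : Invertible DD := ⟨EE, hEEDD, hDDEE⟩
  have hdetDD : DD.det = (x • (1 : Matrix P P ℝ) - M₂).det ^ k := by
    have hre : DD = Matrix.reindex (Equiv.prodComm P (Fin k)) (Equiv.prodComm P (Fin k))
        (Matrix.blockDiagonal (fun _ : Fin k => x • (1 : Matrix P P ℝ) - M₂)) := by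
      ext p q
      simp only [Matrix.reindex_apply, Matrix.submatrix_apply, Equiv.prodComm_symm,
        Equiv.prodComm_apply, Prod.swap, Matrix.blockDiagonal_apply, hDD, Matrix.of_apply]
      try (by_cases h : p.1 = q.1 <;> simp [h])
    rw [hre, Matrix.det_reindex_self, Matrix.det_blockDiagonal, Finset.prod_const,
      Finset.card_univ, Fintype.card_fin]
  have hdetmain : (x • (1 : Matrix (Fin (2 * k) ⊕ (Fin k × P)) (Fin (2 * k) ⊕ (Fin k × P)) ℝ)
      - qMat ℝ G).det = DD.det * (FF - BB * ⅟DD * CC).det := by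
    rw [← Matrix.det_reindex_self e.symm (x • (1 : Matrix (Fin (2 * k) ⊕ (Fin k × P))
      (Fin (2 * k) ⊕ (Fin k × P)) ℝ) - qMat ℝ G), hblock, Matrix.det_fromBlocks₂₂]
  have hinvDD : (⅟DD : Matrix (Fin k × P) (Fin k × P) ℝ) = EE := invOf_eq_right_inv hDDEE
  have hRcol : ∀ t : P, ∑ w : P, R w t = (x - c)⁻¹ := fun t =>
    inv_sum_col M₂ c x hM₂col hdet hxc t
  have hBE : ∀ (z : Fin k ⊕ Fin k) (p : Fin k × P),
      (BB * EE) z p = -(if ix z = p.1 then (x - c)⁻¹ else 0) := by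
    intro z p
    rw [Matrix.mul_apply, Fintype.sum_prod_type]
    rw [Finset.sum_eq_single (ix z)]
    · by_cases h : ix z = p.1
      · have hpt : ∀ t : P, BB z (ix z, t) * EE (ix z, t) p = -(R t p.2) := by
          intro t
          simp only [hBB, hEE, Matrix.of_apply, eq_self_iff_true, if_true]
          rw [if_pos h]
          ring
        rw [Finset.sum_congr rfl fun t _ => hpt t, Finset.sum_neg_distrib, hRcol p.2, if_pos h]
      · have hpt : ∀ t : P, BB z (ix z, t) * EE (ix z, t) p = 0 := by
          intro t
          simp only [hBB, hEE, Matrix.of_apply, eq_self_iff_true, if_true]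
          rw [if_neg h]
          ring
        rw [Finset.sum_congr rfl fun t _ => hpt t]
        simp [h]
    · intro l _ hl
      simp [hBB, Ne.symm hl]
    · intro h; exact absurd (Finset.mem_univ _) h
  have hBEC : ∀ (z y : Fin k ⊕ Fin k),
      (BB * EE * CC) z y = if ix z = ix y then γ else 0 := by
    intro z y
    rw [Matrix.mul_apply]
    simp only [hBE, hCC, Matrix.of_apply]
    rw [Fintype.sum_prod_type]
    rw [Finset.sum_eq_single (ix z)]
    · have hpt : ∀ w : P, (-(if ix z = ix z then (x - c)⁻¹ else 0))
          * (-(if ix y = ix z then (1:ℝ) else 0)) = if ix z = ix y then (x - c)⁻¹ else 0 := by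
        intro w
        by_cases h : ix z = ix y
        · rw [if_pos rfl, if_pos h.symm, if_pos h]
          ring
        · rw [if_pos rfl, if_neg (fun hh => h hh.symm), if_neg h]
          ring
      rw [Finset.sum_congr rfl fun w _ => hpt w, Finset.sum_const, Finset.card_univ,
        nsmul_eq_mul, hcardP]
      by_cases h : ix z = ix y
      · rw [if_pos h, if_pos h, hγ]
      · rw [if_neg h, if_neg h, mul_zero]
    · intro l _ hl
      simp [Ne.symm hl]
    · intro h; exact absurd (Finset.mem_univ _) h
  set SS : Matrix (Fin k ⊕ Fin k) (Fin k ⊕ Fin k) ℝ := FF - BB * EE * CC with hSS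
  set A₁ : Matrix (Fin k) (Fin k) ℝ :=
    Matrix.of (fun i j => (if i = j then α - γ else 0) - 1) with hA₁
  set B₁ : Matrix (Fin k) (Fin k) ℝ :=
    Matrix.of (fun i j => (if i = j then -γ else 0) - 1) with hB₁
  have hSSblocks : SS = Matrix.fromBlocks A₁ B₁ B₁ A₁ := by
    ext z y
    rcases z with i | i <;> rcases y with j | j <;>
      simp only [hSS, Matrix.sub_apply, hFF, Matrix.of_apply, hBEC,
        Matrix.fromBlocks_apply₁₁, Matrix.fromBlocks_apply₁₂, Matrix.fromBlocks_apply₂₁,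
        Matrix.fromBlocks_apply₂₂, hix, Sum.elim_inl, Sum.elim_inr, id_eq,
        Sum.inl.injEq, Sum.inr.injEq, hA₁, hB₁] <;>
      by_cases h : i = j <;>
      simp [h] <;> ring
  set U : Matrix (Fin k ⊕ Fin k) (Fin k ⊕ Fin k) ℝ := Matrix.fromBlocks 1 1 1 (-1) with hU
  have hUU : U * U = Matrix.fromBlocks ((1 : Matrix (Fin k) (Fin k) ℝ) + 1) 0 0 (1 + 1) := by
    rw [hU, Matrix.fromBlocks_multiply]
    congr 1 <;> simp
    all_goals exact ⟨trivial, trivial, trivial⟩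
  have hUSU : U * Matrix.fromBlocks A₁ B₁ B₁ A₁ * U
      = Matrix.fromBlocks (A₁ + B₁ + (B₁ + A₁)) 0 0 (A₁ - B₁ - (B₁ - A₁)) := by
    rw [hU, Matrix.fromBlocks_multiply, Matrix.fromBlocks_multiply]
    congr 1 <;> simp [Matrix.mul_neg] <;> try abel
    all_goals try exact ⟨trivial, trivial, trivial⟩
  haveI : Nonempty (Fin k) := ⟨⟨0, hk⟩⟩
  have hdet2 : ((1 : Matrix (Fin k) (Fin k) ℝ) + 1).det = 2 ^ k := by
    have h2 : (1 : Matrix (Fin k) (Fin k) ℝ) + 1 = (2 : ℝ) • 1 := by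
      rw [two_smul]
    rw [h2, Matrix.det_smul, Matrix.det_one, Fintype.card_fin, mul_one]
  have hdetU2 : U.det * U.det = 2 ^ k * 2 ^ k := by
    rw [← Matrix.det_mul, hUU, Matrix.det_fromBlocks_zero₂₁, hdet2]
  set β : ℝ := α - 2 * γ with hβ
  have hT2 : β * (x - c) = α * (x - c) - 2 * ((m : ℝ) - 2) := by
    rw [hβ, hγ]
    field_simp
    try ring
  have hT1 : (β - 2 * (k : ℝ)) * (x - c)
      = (x - ((m : ℝ) + 4 * (k : ℝ) - 4)) * (x - c) - 2 * ((m : ℝ) - 2) := by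
    rw [hβ, hγ, hα]
    field_simp
    try ring
  have hβ0 : β ≠ 0 := by
    intro h0
    apply hxτ
    have := hT2
    rw [h0, zero_mul] at this
    linarith [this]
  have hX1 : A₁ + B₁ + (B₁ + A₁) = (2 * β) • (1 : Matrix (Fin k) (Fin k) ℝ)
      + (-4 : ℝ) • Matrix.of (fun _ _ => (1:ℝ)) := by
    ext i j
    by_cases h : i = j <;> simp [hA₁, hB₁, Matrix.one_apply, h, hβ] <;> ring
  have hX4 : A₁ - B₁ - (B₁ - A₁) = (2 * α) • (1 : Matrix (Fin k) (Fin k) ℝ) := by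
    ext i j
    by_cases h : i = j <;> simp [hA₁, hB₁, Matrix.one_apply, h] <;> ring
  have hdetX1 : (A₁ + B₁ + (B₁ + A₁)).det = (2 * β) ^ (k - 1) * (2 * β + (-4) * (k : ℝ)) := by
    rw [hX1, det_smul_one_add_one _ _ (mul_ne_zero two_ne_zero hβ0), Fintype.card_fin]
  have hdetX4 : (A₁ - B₁ - (B₁ - A₁)).det = (2 * α) ^ k := by
    rw [hX4, Matrix.det_smul, Matrix.det_one, Fintype.card_fin, mul_one]
  have hdetSS : SS.det = α ^ k * (β ^ (k - 1) * (β - 2 * (k : ℝ))) := by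
    have h1 : U.det * SS.det * U.det
        = (A₁ + B₁ + (B₁ + A₁)).det * (A₁ - B₁ - (B₁ - A₁)).det := by
      rw [← Matrix.det_mul, ← Matrix.det_mul, hSSblocks, hUSU, Matrix.det_fromBlocks_zero₂₁]
    have h2 : SS.det * (2 ^ k * 2 ^ k)
        = ((2 * β) ^ (k - 1) * (2 * β + (-4) * (k : ℝ))) * (2 * α) ^ k := by
      rw [← hdetX1, ← hdetX4, ← h1, ← hdetU2]
      ring
    have hexp := hexp_aux k hk α β (k : ℝ)
    have h2' : SS.det * (2 ^ k * 2 ^ k)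
        = (α ^ k * (β ^ (k - 1) * (β - 2 * (k : ℝ)))) * (2 ^ k * 2 ^ k) := by
      rw [h2, hexp]
    exact mul_right_cancel₀ (by positivity) h2'
  rw [hdetmain, hinvDD, hdetDD, ← hSS, hdetSS, ← hT1, ← hT2]
  exact final_aux k hk _ α β (k : ℝ) (x - c)

/-- Theorem 4.5: `F = K_{2k}`, `𝓔_k` a perfect matching. -/
theorem signlessLap_spec_edgePocketGraph_completeGraph_perfectMatching
    {W : Type*} [Fintype W] [DecidableEq W]
    (m k r₂ : ℕ) (hk : 1 ≤ k) (hm : Fintype.card W = m) (hm3 : 3 ≤ m) (hr₂ : 2 ≤ r₂)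
    (H : SimpleGraph W) (u v : W) (huv : u ≠ v)
    (hdegu : ∀ w : W, w ≠ u → H.Adj u w) (hdegv : ∀ w : W, w ≠ v → H.Adj v w)
    (hreg2 : IsReg (delVert2 H u v) r₂)
    (a b : Fin k → Fin (2 * k))
    (hmatching : Function.Injective (Sum.elim a b : Fin k ⊕ Fin k → Fin (2 * k)))
    (ζ η ρ₁ ρ₂ τ₁ τ₂ : ℝ)
    (hζη : ∀ x : ℝ,
      (x - (2 * (r₂ : ℝ) + 2)) * (x - (m : ℝ)) - 2 * ((m : ℝ) - 2) = (x - ζ) * (x - η))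
    (hρ : ∀ x : ℝ,
      (x - ((m : ℝ) + 4 * (k : ℝ) - 4)) * (x - (2 * (r₂ : ℝ) + 2)) - 2 * ((m : ℝ) - 2)
        = (x - ρ₁) * (x - ρ₂))
    (hτ : ∀ x : ℝ,
      (x - ((m : ℝ) + 2 * (k : ℝ) - 4)) * (x - (2 * (r₂ : ℝ) + 2)) - 2 * ((m : ℝ) - 2)
        = (x - τ₁) * (x - τ₂)) :
    qSpec (edgePocketGraph (⊤ : SimpleGraph (Fin (2 * k))) H u v a b)
      = k • ((((qSpec H).erase ((m : ℝ) - 2)).erase ζ).erase η)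
        + Multiset.replicate k ((m : ℝ) + 2 * (k : ℝ) - 4)
        + {ρ₁, ρ₂}
        + (k - 1) • ({τ₁, τ₂} : Multiset ℝ) := by
  have hvu : v ≠ u := Ne.symm huv
  -- row sums
  have hsum2 : ∀ w : {w : W // w ≠ u ∧ w ≠ v}, ∑ t : {w : W // w ≠ u ∧ w ≠ v},
      adjMat ℝ (delVert2 H u v) w t = (r₂ : ℝ) := by
    intro w
    have := hreg2 w
    simp only [adjMat, Matrix.of_apply, Finset.sum_boole]
    rw [show (Finset.univ.filter fun t => (delVert2 H u v).Adj w t).card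
      = gdeg (delVert2 H u v) w from rfl, this]
  have hM₂row : ∀ w : {w : W // w ≠ u ∧ w ≠ v}, ∑ t : {w : W // w ≠ u ∧ w ≠ v},
      (((r₂ : ℝ) + 2) • (1 : Matrix {w : W // w ≠ u ∧ w ≠ v} {w : W // w ≠ u ∧ w ≠ v} ℝ)
        + adjMat ℝ (delVert2 H u v)) w t = 2 * (r₂ : ℝ) + 2 := by
    intro w
    simp only [Matrix.add_apply, Matrix.smul_apply, Matrix.one_apply, Finset.sum_add_distrib,
      hsum2, smul_eq_mul, mul_ite, mul_one, mul_zero, Finset.sum_ite_eq]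
    simp
    ring
  have hcardPn : Fintype.card {w : W // w ≠ u ∧ w ≠ v} = m - 2 := by
    rw [Fintype.card_subtype]
    have he : (Finset.univ.filter fun w : W => w ≠ u ∧ w ≠ v)
        = (Finset.univ.erase u).erase v := by
      ext w
      simp [Finset.mem_erase, and_comm]
    rw [he, Finset.card_erase_of_mem (Finset.mem_erase.2 ⟨hvu, Finset.mem_univ v⟩),
      Finset.card_erase_of_mem (Finset.mem_univ u), Finset.card_univ, hm]
    omega
  haveI hPne : Nonempty {w : W // w ≠ u ∧ w ≠ v} :=
    Fintype.card_pos_iff.1 (by rw [hcardPn]; omega)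
  -- 2r₂+2 is a root of the charpoly of M₂
  have hisroot : ((((r₂ : ℝ) + 2) • (1 : Matrix {w : W // w ≠ u ∧ w ≠ v}
      {w : W // w ≠ u ∧ w ≠ v} ℝ) + adjMat ℝ (delVert2 H u v)).charpoly).IsRoot
      (2 * (r₂ : ℝ) + 2) := by
    have hmv : ((2 * (r₂ : ℝ) + 2) • (1 : Matrix {w : W // w ≠ u ∧ w ≠ v}
        {w : W // w ≠ u ∧ w ≠ v} ℝ)
          - (((r₂ : ℝ) + 2) • 1 + adjMat ℝ (delVert2 H u v))) *ᵥ (fun _ => (1:ℝ)) = 0 := by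
      funext w
      simp only [Matrix.mulVec, dotProduct, mul_one]
      have hsplit : ∑ t : {w : W // w ≠ u ∧ w ≠ v},
          ((2 * (r₂ : ℝ) + 2) • (1 : Matrix {w : W // w ≠ u ∧ w ≠ v}
            {w : W // w ≠ u ∧ w ≠ v} ℝ)
            - (((r₂ : ℝ) + 2) • 1 + adjMat ℝ (delVert2 H u v))) w t
          = (∑ t, ((2 * (r₂ : ℝ) + 2) • (1 : Matrix {w : W // w ≠ u ∧ w ≠ v}
            {w : W // w ≠ u ∧ w ≠ v} ℝ)) w t)
            - ∑ t, (((r₂ : ℝ) + 2) • (1 : Matrix {w : W // w ≠ u ∧ w ≠ v}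
            {w : W // w ≠ u ∧ w ≠ v} ℝ) + adjMat ℝ (delVert2 H u v)) w t := by
        simp [Finset.sum_sub_distrib]
      rw [hsplit, hM₂row]
      simp [Matrix.one_apply, Finset.sum_ite_eq]
    have hvne : (fun _ : {w : W // w ≠ u ∧ w ≠ v} => (1:ℝ)) ≠ 0 :=
      Function.ne_iff.2 ⟨Classical.arbitrary _, one_ne_zero⟩
    have hdet0 := Matrix.exists_mulVec_eq_zero_iff.mp ⟨fun _ => (1:ℝ), hvne, hmv⟩
    rw [Polynomial.IsRoot, eval_charpoly', hdet0]
  set g : Polynomial ℝ := (((r₂ : ℝ) + 2) • (1 : Matrix {w : W // w ≠ u ∧ w ≠ v}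
      {w : W // w ≠ u ∧ w ≠ v} ℝ) + adjMat ℝ (delVert2 H u v)).charpoly
      / (X - C (2 * (r₂ : ℝ) + 2)) with hgdef
  have hgM : (X - C (2 * (r₂ : ℝ) + 2)) * g
      = (((r₂ : ℝ) + 2) • (1 : Matrix {w : W // w ≠ u ∧ w ≠ v}
        {w : W // w ≠ u ∧ w ≠ v} ℝ) + adjMat ℝ (delVert2 H u v)).charpoly :=
    Polynomial.mul_div_eq_iff_isRoot.2 hisroot
  have hM₂ne : (((r₂ : ℝ) + 2) • (1 : Matrix {w : W // w ≠ u ∧ w ≠ v}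
      {w : W // w ≠ u ∧ w ≠ v} ℝ) + adjMat ℝ (delVert2 H u v)).charpoly ≠ 0 :=
    (Matrix.charpoly_monic _).ne_zero
  have hQHne : (qMat ℝ H).charpoly ≠ 0 := (Matrix.charpoly_monic _).ne_zero
  have hQGne : (qMat ℝ (edgePocketGraph (⊤ : SimpleGraph (Fin (2 * k))) H u v a b)).charpoly
      ≠ 0 := (Matrix.charpoly_monic _).ne_zero
  have hgne : g ≠ 0 := fun h => hM₂ne (by rw [← hgM, h, mul_zero])
  -- infinitely many good points
  have hpbadne : (((r₂ : ℝ) + 2) • (1 : Matrix {w : W // w ≠ u ∧ w ≠ v}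
      {w : W // w ≠ u ∧ w ≠ v} ℝ) + adjMat ℝ (delVert2 H u v)).charpoly
      * ((X - C (2 * (r₂ : ℝ) + 2)) * ((X - C τ₁) * (X - C τ₂))) ≠ 0 :=
    mul_ne_zero hM₂ne (mul_ne_zero (Polynomial.X_sub_C_ne_zero _)
      (mul_ne_zero (Polynomial.X_sub_C_ne_zero _) (Polynomial.X_sub_C_ne_zero _)))
  have hinf : {x : ℝ | Polynomial.eval x ((((r₂ : ℝ) + 2) • (1 : Matrix {w : W // w ≠ u ∧ w ≠ v}
      {w : W // w ≠ u ∧ w ≠ v} ℝ) + adjMat ℝ (delVert2 H u v)).charpoly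
      * ((X - C (2 * (r₂ : ℝ) + 2)) * ((X - C τ₁) * (X - C τ₂)))) ≠ 0}.Infinite := by
    have hfin := Polynomial.finite_setOf_isRoot hpbadne
    exact hfin.infinite_compl
  have hgood : ∀ x : ℝ, Polynomial.eval x ((((r₂ : ℝ) + 2) •
      (1 : Matrix {w : W // w ≠ u ∧ w ≠ v} {w : W // w ≠ u ∧ w ≠ v} ℝ)
      + adjMat ℝ (delVert2 H u v)).charpoly
      * ((X - C (2 * (r₂ : ℝ) + 2)) * ((X - C τ₁) * (X - C τ₂)))) ≠ 0 →
      ((x • (1 : Matrix {w : W // w ≠ u ∧ w ≠ v} {w : W // w ≠ u ∧ w ≠ v} ℝ)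
        - (((r₂ : ℝ) + 2) • 1 + adjMat ℝ (delVert2 H u v))).det ≠ 0 ∧
        x ≠ 2 * (r₂ : ℝ) + 2 ∧
        (x - ((m : ℝ) + 2 * (k : ℝ) - 4)) * (x - (2 * (r₂ : ℝ) + 2)) - 2 * ((m : ℝ) - 2) ≠ 0) := by
    intro x hx
    simp only [Polynomial.eval_mul, Polynomial.eval_sub, Polynomial.eval_X, Polynomial.eval_C,
      mul_ne_zero_iff] at hx
    obtain ⟨h1, h2, h3, h4⟩ := hx
    refine ⟨?_, ?_, ?_⟩
    · rw [← eval_charpoly']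
      exact h1
    · exact sub_ne_zero.1 h2
    · rw [hτ x]
      exact mul_ne_zero h3 h4
  have hPA : (qMat ℝ H).charpoly * (X - C (2 * (r₂ : ℝ) + 2))
      = (((r₂ : ℝ) + 2) • (1 : Matrix {w : W // w ≠ u ∧ w ≠ v}
        {w : W // w ≠ u ∧ w ≠ v} ℝ) + adjMat ℝ (delVert2 H u v)).charpoly
        * ((X - C ((m : ℝ) - 2)) * ((X - C ζ) * (X - C η))) := by
    apply Polynomial.eq_of_infinite_eval_eq
    refine Set.Infinite.mono ?_ hinf
    intro x hx
    obtain ⟨hdetx, hxc, -⟩ := hgood x hx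
    simp only [Set.mem_setOf_eq, Polynomial.eval_mul, Polynomial.eval_sub, Polynomial.eval_X,
      Polynomial.eval_C, eval_charpoly']
    rw [detH m r₂ hm hm3 H u v huv hdegu hdegv hreg2 x hdetx hxc, hζη x]
  have hPB : (qMat ℝ (edgePocketGraph (⊤ : SimpleGraph (Fin (2 * k))) H u v a b)).charpoly
      * (X - C (2 * (r₂ : ℝ) + 2)) ^ k
      = (((r₂ : ℝ) + 2) • (1 : Matrix {w : W // w ≠ u ∧ w ≠ v}
        {w : W // w ≠ u ∧ w ≠ v} ℝ) + adjMat ℝ (delVert2 H u v)).charpoly ^ k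
        * ((X - C ((m : ℝ) + 2 * (k : ℝ) - 4)) ^ k
          * ((X - C ρ₁) * (X - C ρ₂)) * ((X - C τ₁) * (X - C τ₂)) ^ (k - 1)) := by
    apply Polynomial.eq_of_infinite_eval_eq
    refine Set.Infinite.mono ?_ hinf
    intro x hx
    obtain ⟨hdetx, hxc, hxτ⟩ := hgood x hx
    simp only [Set.mem_setOf_eq, Polynomial.eval_mul, Polynomial.eval_pow, Polynomial.eval_sub,
      Polynomial.eval_X, Polynomial.eval_C, eval_charpoly']
    rw [detG m k r₂ hk hm hm3 H u v huv hdegu hdegv hreg2 a b hmatching x hdetx hxc hxτ,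
      hρ x, hτ x]
  -- factorisations
  have hfactH : (qMat ℝ H).charpoly
      = g * ((X - C ((m : ℝ) - 2)) * ((X - C ζ) * (X - C η))) := by
    apply mul_right_cancel₀ (Polynomial.X_sub_C_ne_zero (2 * (r₂ : ℝ) + 2))
    rw [hPA, ← hgM]
    ring
  have hfactG : (qMat ℝ (edgePocketGraph (⊤ : SimpleGraph (Fin (2 * k))) H u v a b)).charpoly
      = g ^ k * ((X - C ((m : ℝ) + 2 * (k : ℝ) - 4)) ^ k
          * ((X - C ρ₁) * (X - C ρ₂)) * ((X - C τ₁) * (X - C τ₂)) ^ (k - 1)) := by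
    apply mul_right_cancel₀ (pow_ne_zero k (Polynomial.X_sub_C_ne_zero (2 * (r₂ : ℝ) + 2)))
    rw [hPB, ← hgM, mul_pow]
    ring
  -- spectra
  have hspecH : qSpec H = ((m : ℝ) - 2) ::ₘ ζ ::ₘ η ::ₘ g.roots := by
    rw [qSpec_eq, hfactH,
      Polynomial.roots_mul (by rw [← hfactH]; exact hQHne),
      Polynomial.roots_mul (mul_ne_zero (Polynomial.X_sub_C_ne_zero _)
        (mul_ne_zero (Polynomial.X_sub_C_ne_zero _) (Polynomial.X_sub_C_ne_zero _))),
      Polynomial.roots_mul (mul_ne_zero (Polynomial.X_sub_C_ne_zero _)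
        (Polynomial.X_sub_C_ne_zero _))]
    simp only [Polynomial.roots_X_sub_C]
    rw [add_comm]
    simp [Multiset.singleton_add, Multiset.cons_add]
    try exact Multiset.cons_swap _ _ _
  have herase : (((qSpec H).erase ((m : ℝ) - 2)).erase ζ).erase η = g.roots := by
    rw [hspecH, Multiset.erase_cons_head, Multiset.erase_cons_head, Multiset.erase_cons_head]
  have hneρ : ((X - C ρ₁) * (X - C ρ₂) : Polynomial ℝ) ≠ 0 :=
    mul_ne_zero (Polynomial.X_sub_C_ne_zero _) (Polynomial.X_sub_C_ne_zero _)
  have hneτ : ((X - C τ₁) * (X - C τ₂) : Polynomial ℝ) ≠ 0 :=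
    mul_ne_zero (Polynomial.X_sub_C_ne_zero _) (Polynomial.X_sub_C_ne_zero _)
  have hneA : ((X - C ((m : ℝ) + 2 * (k : ℝ) - 4)) : Polynomial ℝ) ≠ 0 :=
    Polynomial.X_sub_C_ne_zero _
  rw [qSpec_eq, hfactG,
    Polynomial.roots_mul (by rw [← hfactG]; exact hQGne),
    Polynomial.roots_mul (mul_ne_zero (mul_ne_zero (pow_ne_zero _ hneA) hneρ)
      (pow_ne_zero _ hneτ)),
    Polynomial.roots_mul (mul_ne_zero (pow_ne_zero _ hneA) hneρ),
    Polynomial.roots_pow, Polynomial.roots_pow, Polynomial.roots_pow,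
    Polynomial.roots_mul hneρ, Polynomial.roots_mul hneτ]
  simp only [Polynomial.roots_X_sub_C]
  rw [herase, Multiset.nsmul_singleton]
  simp only [Multiset.singleton_add]
  rw [show ({ρ₁, ρ₂} : Multiset ℝ) = ρ₁ ::ₘ {ρ₂} from rfl,
    show ({τ₁, τ₂} : Multiset ℝ) = τ₁ ::ₘ {τ₂} from rfl]
  simp [add_assoc, add_comm, add_left_comm]
end

section
/- Let p ≥ 3, r_1 ≥ 2, m − 1 = p(r_1 − 1), let G_p^{r_1} = C_p □ K_{r_1−1}, and let G* = G[F,V_k,H_v*] with |V_k| = k, where H_v* is the join of a single vertex v with G_p^{r_1}. Then every eigenvalue λ_j(G_p^{r_1}), j = 1,…,m−2 (i.e., every adjacency eigenvalue of G_p^{r_1} counted with multiplicity, excluding one copy of the largest eigenvalue r_1), is an eigenvalue of A(G*) with multiplicity at least k; indeed, if X_s ⊗ Y_t is an eigenvector of A(G_p^{r_1}) for the eigenvalue λ_s(C_p) + λ_t(K_{r_1−1}) with X_s ⊗ Y_t not equal to the all-ones vector, then the k vectors supported on the k copies of G_p^{r_1}, each equal to X_s ⊗ Y_t on one copy and zero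 elsewhere, are linearly independent eigenvectors of A(G*) for that eigenvalue. -/
open Matrix BigOperators
open scoped Classical

section AuxProofs

open Polynomial

lemma adjMat_isHermitian {V : Type*} [Fintype V] (G : SimpleGraph V) :
    (adjMat ℝ G).IsHermitian := by
  ext i j
  simp [adjMat, Matrix.conjTranspose_apply, SimpleGraph.adj_comm]

lemma charpoly_conj_unit {n : Type*} [Fintype n] [DecidableEq n]
    (U B : Matrix n n ℝ) (h1 : U * star U = 1) :
    (U * B * star U).charpoly = B.charpoly := by
  have hcm : charmatrix (U * B * star U)
      = (U.map (C : ℝ →+* ℝ[X])) * charmatrix B * ((star U).map (C : ℝ →+* ℝ[X])) := by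
    simp only [charmatrix, RingHom.mapMatrix_apply]
    rw [mul_sub, sub_mul]
    congr 1
    · rw [← (Matrix.scalar_commute (X : ℝ[X]) (fun r' => Commute.all _ _) (U.map (C : ℝ →+* ℝ[X]))).eq,
        mul_assoc, ← Matrix.map_mul, h1, Matrix.map_one _ (map_zero _) (map_one _), mul_one]
    · rw [Matrix.map_mul, Matrix.map_mul]
  have hdet : (U.map (C : ℝ →+* ℝ[X])).det * ((star U).map (C : ℝ →+* ℝ[X])).det = 1 := by
    rw [← Matrix.det_mul, ← Matrix.map_mul, h1, Matrix.map_one _ (map_zero _) (map_one _),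
      Matrix.det_one]
  rw [Matrix.charpoly, Matrix.charpoly, hcm, Matrix.det_mul, Matrix.det_mul]
  calc (U.map (C : ℝ →+* ℝ[X])).det * (charmatrix B).det * ((star U).map (C : ℝ →+* ℝ[X])).det
      = (charmatrix B).det * ((U.map (C : ℝ →+* ℝ[X])).det * ((star U).map (C : ℝ →+* ℝ[X])).det) := by ring
    _ = (charmatrix B).det := by rw [hdet, mul_one]

lemma charpoly_diagonal_real {n : Type*} [Fintype n] [DecidableEq n] (d : n → ℝ) :
    (Matrix.diagonal d).charpoly = ∏ i, (X - C (d i)) := by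
  have hcm : charmatrix (Matrix.diagonal d) = Matrix.diagonal (fun i => (X : ℝ[X]) - C (d i)) := by
    refine Matrix.ext fun i j => ?_
    by_cases h : i = j
    · subst h; simp [charmatrix_apply_eq, Matrix.diagonal_apply_eq]
    · rw [charmatrix_apply_ne _ _ _ h, Matrix.diagonal_apply_ne _ h,
        Matrix.diagonal_apply_ne _ h, map_zero, neg_zero]
  rw [Matrix.charpoly, hcm, Matrix.det_diagonal]

lemma hermitian_charpoly_roots {n : Type*} [Fintype n] [DecidableEq n]
    {A : Matrix n n ℝ} (hA : A.IsHermitian) :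
    A.charpoly.roots = Finset.univ.val.map hA.eigenvalues := by
  have hU1 : (hA.eigenvectorUnitary : Matrix n n ℝ) * star (hA.eigenvectorUnitary : Matrix n n ℝ) = 1 :=
    Matrix.mem_unitaryGroup_iff.mp hA.eigenvectorUnitary.2
  have hsp := hA.spectral_theorem
  have hdiag : Matrix.diagonal (RCLike.ofReal ∘ hA.eigenvalues) = Matrix.diagonal hA.eigenvalues := by
    congr 1
  have h2 : A.charpoly = (Matrix.diagonal hA.eigenvalues).charpoly := by
    conv_lhs => rw [hsp, hdiag]
    exact charpoly_conj_unit _ _ hU1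
  rw [h2, charpoly_diagonal_real]
  have : ∏ i, ((X : ℝ[X]) - C (hA.eigenvalues i))
      = ((Finset.univ.val.map hA.eigenvalues).map fun a => (X : ℝ[X]) - C a).prod := by
    rw [Multiset.map_map]
    rfl
  rw [this, Polynomial.roots_multiset_prod_X_sub_C]

lemma hermitian_count_roots {n : Type*} [Fintype n] [DecidableEq n]
    {A : Matrix n n ℝ} (hA : A.IsHermitian) (μ : ℝ) :
    Multiset.count μ A.charpoly.roots
      = (Finset.univ.filter fun i => hA.eigenvalues i = μ).card := by
  rw [hermitian_charpoly_roots hA, Multiset.count_map]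
  rw [Finset.card_filter]
  simp [Finset.sum_boole, eq_comm]
  congr 1

lemma exists_eigvec_of_mem_roots {n : Type*} [Fintype n] [DecidableEq n]
    {A : Matrix n n ℝ} (hA : A.IsHermitian) {μ : ℝ} (h : μ ∈ A.charpoly.roots) :
    ∃ i, hA.eigenvalues i = μ := by
  rw [hermitian_charpoly_roots hA] at h
  obtain ⟨i, _, hi⟩ := Multiset.mem_map.mp h
  exact ⟨i, hi⟩

lemma card_le_count_of_eigenvectors {n : Type*} [Fintype n] [DecidableEq n]
    {A : Matrix n n ℝ} (hA : A.IsHermitian) (μ : ℝ) {k : ℕ}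
    (Z : Fin k → (n → ℝ)) (hZ : ∀ i, A.mulVec (Z i) = μ • Z i)
    (hind : LinearIndependent ℝ Z) :
    k ≤ Multiset.count μ A.charpoly.roots := by
  classical
  set b := hA.eigenvectorBasis with hb
  have hAT : Aᵀ = A := by
    refine Matrix.ext fun i j => ?_
    have := congrFun (congrFun hA.eq i) j
    simpa [Matrix.conjTranspose_apply] using this
  -- eigenspace as a submodule of (n → ℝ)
  set E : Submodule ℝ (n → ℝ) := LinearMap.ker (A.mulVecLin - μ • LinearMap.id) with hE
  have memE : ∀ x : n → ℝ, x ∈ E ↔ A.mulVec x = μ • x := by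
    intro x
    simp only [hE, LinearMap.mem_ker, LinearMap.sub_apply, Matrix.mulVecLin_apply,
      LinearMap.smul_apply, LinearMap.id_apply, sub_eq_zero]
  -- the spanning family
  set g : {i // hA.eigenvalues i = μ} → (n → ℝ) := fun i => ⇑(b i.1) with hg
  have key : ∀ x : n → ℝ, x ∈ E → x ∈ Submodule.span ℝ (Set.range g) := by
    intro x hx
    rw [memE] at hx
    have hrepr := b.sum_repr' (WithLp.toLp 2 x)
    have hcoef : ∀ i : n, hA.eigenvalues i ≠ μ → (inner ℝ (b i) (WithLp.toLp 2 x) : ℝ) = 0 := by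
      intro i hi
      have hinner : (inner ℝ (b i) (WithLp.toLp 2 x) : ℝ) = ⇑(b i) ⬝ᵥ x := by
        simp [PiLp.inner_apply, dotProduct, mul_comm]
      have h1 : ⇑(b i) ⬝ᵥ (A.mulVec x) = μ * (⇑(b i) ⬝ᵥ x) := by
        rw [hx, dotProduct_smul]; rfl
      have h2 : ⇑(b i) ⬝ᵥ (A.mulVec x) = hA.eigenvalues i * (⇑(b i) ⬝ᵥ x) := by
        rw [Matrix.dotProduct_mulVec, ← Matrix.mulVec_transpose, hAT,
          hA.mulVec_eigenvectorBasis, smul_dotProduct]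
        rfl
      have h3 : (hA.eigenvalues i - μ) * (⇑(b i) ⬝ᵥ x) = 0 := by
        rw [sub_mul, ← h1, ← h2, sub_self]
      rcases mul_eq_zero.mp h3 with h | h
      · exact absurd (by linarith [sub_eq_zero.mp h] : hA.eigenvalues i = μ) hi
      · rw [hinner, h]
    rw [show x = WithLp.ofLp (WithLp.toLp 2 x) from rfl, ← hrepr, WithLp.ofLp_sum]
    refine Submodule.sum_mem _ fun i _ => ?_
    rw [WithLp.ofLp_smul]
    by_cases hi : hA.eigenvalues i = μ
    · exact Submodule.smul_mem _ _ (Submodule.subset_span ⟨⟨i, hi⟩, rfl⟩)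
    · rw [hcoef i hi, zero_smul]
      exact Submodule.zero_mem _
  have hEle : E ≤ Submodule.span ℝ (Set.range g) := fun x hx => key x hx
  have h1 : k ≤ Module.finrank ℝ E := by
    have hZ' : ∀ i, Z i ∈ E := fun i => (memE (Z i)).mpr (hZ i)
    set Z' : Fin k → E := fun i => ⟨Z i, hZ' i⟩ with hZ'def
    have hindep : LinearIndependent ℝ Z' := by
      apply LinearIndependent.of_comp E.subtype
      exact hind
    simpa using hindep.fintype_card_le_finrank
  have h2 : Module.finrank ℝ E ≤ Fintype.card {i // hA.eigenvalues i = μ} := by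
    calc Module.finrank ℝ E ≤ Module.finrank ℝ (Submodule.span ℝ (Set.range g)) :=
          Submodule.finrank_mono hEle
      _ ≤ (Set.range g).toFinset.card := finrank_span_le_card _
      _ ≤ Fintype.card {i // hA.eigenvalues i = μ} := by
          rw [Set.toFinset_card]
          exact Fintype.card_range_le g
  rw [hermitian_count_roots hA μ, ← Fintype.card_subtype]
  exact h1.trans h2

lemma mulVec_apply' {n : Type*} [Fintype n] (A : Matrix n n ℝ) (x : n → ℝ) (v : n) :
    A.mulVec x v = ∑ u, A v u * x u := rfl

lemma rowsum_adj {n : Type*} [Fintype n] (G : SimpleGraph n) (v : n) :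
    ∑ u, adjMat ℝ G v u = ∑ u ∈ Finset.univ.filter (G.Adj v), (1 : ℝ) := by
  rw [Finset.sum_filter]
  rfl

lemma eigen_const_of_reg {n : Type*} [Fintype n] (G : SimpleGraph n)
    (hconn : G.Connected) (r : ℝ)
    (hreg : ∀ v, ∑ u, adjMat ℝ G v u = r)
    (x : n → ℝ) (hx : (adjMat ℝ G).mulVec x = r • x) :
    ∃ c : ℝ, ∀ v, x v = c := by
  classical
  have : Nonempty n := hconn.nonempty
  obtain ⟨v0, -, hmax⟩ := Finset.exists_max_image Finset.univ x Finset.univ_nonempty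
  have hmax' : ∀ v, x v ≤ x v0 := fun v => hmax v (Finset.mem_univ v)
  have key : ∀ u v, G.Adj u v → x u = x v0 → x v = x v0 := by
    intro u v huv hu
    by_contra hne
    have hvlt : x v < x v0 := lt_of_le_of_ne (hmax' v) hne
    have hrow : ∑ y ∈ Finset.univ.filter (G.Adj u), x y = r * x v0 := by
      have h1 := congrFun hx u
      rw [mulVec_apply'] at h1
      have h2 : ∑ y, adjMat ℝ G u y * x y = ∑ y ∈ Finset.univ.filter (G.Adj u), x y := by
        rw [Finset.sum_filter]
        refine Finset.sum_congr rfl fun y _ => ?_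
        by_cases h : G.Adj u y <;> simp [adjMat, h]
      rw [h2] at h1
      rw [h1, Pi.smul_apply, smul_eq_mul, hu]
    have hconst : ∑ y ∈ Finset.univ.filter (G.Adj u), x v0 = r * x v0 := by
      rw [Finset.sum_const, ← hreg u, rowsum_adj, Finset.sum_const]
      simp [mul_comm]
    have hlt : ∑ y ∈ Finset.univ.filter (G.Adj u), x y
        < ∑ y ∈ Finset.univ.filter (G.Adj u), x v0 :=
      Finset.sum_lt_sum (fun y _ => hmax' y)
        ⟨v, Finset.mem_filter.mpr ⟨Finset.mem_univ v, huv⟩, hvlt⟩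
    rw [hrow, hconst] at hlt
    exact lt_irrefl _ hlt
  have walkkey : ∀ (u v : n) (_ : G.Walk u v), x u = x v0 → x v = x v0 := by
    intro u v w
    induction w with
    | nil => exact id
    | cons h p ih => exact fun hu => ih (key _ _ h hu)
  refine ⟨x v0, fun v => ?_⟩
  exact ((hconn.preconnected v0 v).elim fun w => walkkey _ _ w rfl)

lemma sum_eq_zero_of_eigen {n : Type*} [Fintype n] (A : Matrix n n ℝ)
    (hsymm : ∀ i j, A i j = A j i) (r μ : ℝ)
    (hr : ∀ v, ∑ u, A v u = r) (x : n → ℝ)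
    (hx : A.mulVec x = μ • x) (hμ : μ ≠ r) :
    ∑ v, x v = 0 := by
  have h1 : ∑ v, A.mulVec x v = μ * ∑ v, x v := by
    rw [hx]
    simp [Finset.mul_sum]
  have h2 : ∑ v, A.mulVec x v = r * ∑ v, x v := by
    simp only [mulVec_apply']
    rw [Finset.sum_comm]
    rw [Finset.mul_sum]
    refine Finset.sum_congr rfl fun u _ => ?_
    rw [← Finset.sum_mul]
    congr 1
    rw [← hr u]
    exact Finset.sum_congr rfl fun v _ => hsymm v u
  have : (μ - r) * ∑ v, x v = 0 := by rw [sub_mul, ← h1, ← h2, sub_self]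
  rcases mul_eq_zero.mp this with h | h
  · exact absurd (by linarith [sub_eq_zero.mp h]) hμ
  · exact h

lemma ite_or_split (P Q : Prop) (h : ¬(P ∧ Q)) :
    (if P ∨ Q then (1:ℝ) else 0) = (if P then (1:ℝ) else 0) + (if Q then (1:ℝ) else 0) := by
  by_cases hP : P <;> by_cases hQ : Q <;> simp_all

lemma boxProd_adj_entry {α β : Type*} [Fintype α] [Fintype β]
    (G : SimpleGraph α) (H : SimpleGraph β) (a c : α) (b d : β) :
    adjMat ℝ (G.boxProd H) (a, b) (c, d)
      = (if G.Adj a c then (1:ℝ) else 0) * (if b = d then (1:ℝ) else 0)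
        + (if H.Adj b d then (1:ℝ) else 0) * (if a = c then (1:ℝ) else 0) := by
  have hadj : (G.boxProd H).Adj (a, b) (c, d) ↔ (G.Adj a c ∧ b = d) ∨ (H.Adj b d ∧ a = c) :=
    SimpleGraph.boxProd_adj
  show (if (G.boxProd H).Adj (a, b) (c, d) then (1:ℝ) else 0) = _
  by_cases h4 : a = c
  · subst h4
    have h1 : ¬ G.Adj a a := G.loopless.irrefl a
    by_cases h2 : b = d <;> by_cases h3 : H.Adj b d <;> simp [hadj, h1, h2, h3]
  · by_cases h1 : G.Adj a c <;> by_cases h2 : b = d <;> by_cases h3 : H.Adj b d <;>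
      simp [hadj, h1, h2, h3, h4]

lemma tensor_eigen {α β : Type*} [Fintype α] [Fintype β]
    (G : SimpleGraph α) (H : SimpleGraph β)
    (X : α → ℝ) (Y : β → ℝ) (ls lt : ℝ)
    (hX : (adjMat ℝ G).mulVec X = ls • X) (hY : (adjMat ℝ H).mulVec Y = lt • Y) :
    (adjMat ℝ (G.boxProd H)).mulVec (fun z => X z.1 * Y z.2)
      = (ls + lt) • (fun z : α × β => X z.1 * Y z.2) := by
  funext z
  obtain ⟨a, b⟩ := z
  have h5 : ∑ c, (if G.Adj a c then (1:ℝ) else 0) * X c = ls * X a := by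
    have h := congrFun hX a
    rw [mulVec_apply'] at h
    simpa [adjMat] using h
  have h7 : ∑ d, (if H.Adj b d then (1:ℝ) else 0) * Y d = lt * Y b := by
    have h := congrFun hY b
    rw [mulVec_apply'] at h
    simpa [adjMat] using h
  have h6 : ∑ d, (if b = d then (1:ℝ) else 0) * Y d = Y b := by
    simp [ite_mul]
  have h8 : ∑ c, (if a = c then (1:ℝ) else 0) * X c = X a := by
    simp [ite_mul]
  have hterm : ∀ c d, adjMat ℝ (G.boxProd H) (a, b) (c, d) * (X c * Y d)
      = ((if G.Adj a c then (1:ℝ) else 0) * X c) * ((if b = d then (1:ℝ) else 0) * Y d)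
        + ((if a = c then (1:ℝ) else 0) * X c) * ((if H.Adj b d then (1:ℝ) else 0) * Y d) := by
    intro c d
    rw [boxProd_adj_entry]
    ring
  rw [mulVec_apply', Fintype.sum_prod_type]
  simp only [hterm, Finset.sum_add_distrib]
  rw [← Finset.sum_mul_sum, ← Finset.sum_mul_sum, h5, h6, h7, h8]
  show _ = (ls + lt) * (X a * Y b)
  ring

def subEquiv (W : Type*) : W ≃ {s : Unit ⊕ W // s ≠ Sum.inl ()} where
  toFun q := ⟨Sum.inr q, fun h => Sum.inr_ne_inl h⟩
  invFun s := match s with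
    | ⟨Sum.inl u, h⟩ => (h (by cases u; rfl)).elim
    | ⟨Sum.inr q, _⟩ => q
  left_inv q := rfl
  right_inv s := by
    rcases s with ⟨u | q, h⟩
    · exact (h (by cases u; rfl)).elim
    · rfl

noncomputable def pocketVec {V W : Type*} (k : ℕ) (w : W → ℝ) (i : Fin k) :
    (V ⊕ (Fin k × {s : Unit ⊕ W // s ≠ Sum.inl ()})) → ℝ :=
  fun x => Sum.elim (fun _ => (0:ℝ))
    (fun jw : Fin k × {s : Unit ⊕ W // s ≠ Sum.inl ()} =>
      if i = jw.1 then Sum.elim (fun _ => (0:ℝ)) w jw.2.1 else 0) x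

lemma pocketVec_linearIndependent {V W : Type*} {k : ℕ} (w : W → ℝ) (hw : w ≠ 0) :
    LinearIndependent ℝ (pocketVec (V := V) k w) := by
  obtain ⟨q0, hq0⟩ := Function.ne_iff.mp hw
  rw [Fintype.linearIndependent_iff]
  intro c hc i
  have h := congrFun hc (Sum.inr (i, ⟨Sum.inr q0, fun h => Sum.inr_ne_inl h⟩))
  simp only [Finset.sum_apply, Pi.smul_apply, pocketVec, Sum.elim_inr, smul_eq_mul,
    Pi.zero_apply] at h
  simp only [mul_ite, mul_zero] at h
  rw [Finset.sum_ite_eq' Finset.univ i (fun j => c j * w q0)] at h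
  simp only [Finset.mem_univ, if_true] at h
  have hq0' : w q0 ≠ 0 := by simpa using hq0
  exact (mul_eq_zero.mp h).resolve_right hq0'

lemma pocket_mulVec {V W : Type*} [Fintype V] [Fintype W] [DecidableEq V] [DecidableEq W]
    (F : SimpleGraph V) (G : SimpleGraph W) {k : ℕ} (f : Fin k ↪ V)
    (μ : ℝ) (w : W → ℝ) (hev : (adjMat ℝ G).mulVec w = μ • w)
    (hsum : ∑ q, w q = 0) (i : Fin k) :
    (adjMat ℝ (pocketGraph F (sgJoin (⊤ : SimpleGraph Unit) G) (Sum.inl ()) f)).mulVec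
      (pocketVec k w i) = μ • pocketVec k w i := by
  classical
  set P := pocketGraph F (sgJoin (⊤ : SimpleGraph Unit) G) (Sum.inl ()) f with hP
  funext x
  rw [mulVec_apply', Fintype.sum_sum_type]
  have hzero : ∑ a : V, adjMat ℝ P x (Sum.inl a) * pocketVec k w i (Sum.inl a) = 0 := by
    refine Finset.sum_eq_zero fun a _ => ?_
    show adjMat ℝ P x (Sum.inl a) * 0 = 0
    rw [mul_zero]
  rw [hzero, zero_add, Fintype.sum_prod_type]
  have hinner : ∀ j : Fin k, ∑ s : {s : Unit ⊕ W // s ≠ Sum.inl ()},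
      adjMat ℝ P x (Sum.inr (j, s)) * pocketVec (V := V) k w i (Sum.inr (j, s))
      = if i = j then ∑ q : W, adjMat ℝ P x
          (Sum.inr (j, ⟨Sum.inr q, fun h => Sum.inr_ne_inl h⟩)) * w q
        else 0 := by
    intro j
    by_cases hij : i = j
    · rw [if_pos hij]
      rw [← Equiv.sum_comp (subEquiv W)
        (fun s => adjMat ℝ P x (Sum.inr (j, s)) * pocketVec (V := V) k w i (Sum.inr (j, s)))]
      refine Finset.sum_congr rfl fun q _ => ?_
      have hv : pocketVec (V := V) k w i (Sum.inr (j, subEquiv W q)) = w q := by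
        simp [pocketVec, subEquiv, hij]
      rw [hv]
      rfl
    · rw [if_neg hij]
      refine Finset.sum_eq_zero fun s _ => ?_
      have hv : pocketVec (V := V) k w i (Sum.inr (j, s)) = 0 := by
        simp [pocketVec, hij]
      rw [hv, mul_zero]
  simp only [hinner]
  rw [Finset.sum_ite_eq Finset.univ i
    (fun j => ∑ q : W, adjMat ℝ P x
      (Sum.inr (j, ⟨Sum.inr q, fun h => Sum.inr_ne_inl h⟩)) * w q)]
  simp only [Finset.mem_univ, if_true]
  cases x with
  | inl a =>
    have hA : ∀ q : W, adjMat ℝ P (Sum.inl a)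
        (Sum.inr (i, ⟨Sum.inr q, fun h => Sum.inr_ne_inl h⟩)) = if a = f i then (1:ℝ) else 0 := by
      intro q
      have hadj : P.Adj (Sum.inl a) (Sum.inr (i, ⟨Sum.inr q, fun h => Sum.inr_ne_inl h⟩))
          ↔ a = f i := by
        constructor
        · rintro ⟨h1, -⟩; exact h1
        · intro h1; exact ⟨h1, trivial⟩
      simp [adjMat, hadj]
    simp only [hA, ite_mul, one_mul, zero_mul]
    have hrhs : (μ • pocketVec (V := V) k w i) (Sum.inl a) = 0 := by
      simp [pocketVec]
    rw [hrhs]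
    by_cases haf : a = f i
    · simp only [if_pos haf]
      exact hsum
    · simp only [if_neg haf]
      exact Finset.sum_const_zero
  | inr js =>
    obtain ⟨j, s⟩ := js
    rcases s with ⟨u | q', hs⟩
    · cases u; exact absurd rfl hs
    · have hA : ∀ q : W, adjMat ℝ P (Sum.inr (j, ⟨Sum.inr q', hs⟩))
          (Sum.inr (i, ⟨Sum.inr q, fun h => Sum.inr_ne_inl h⟩))
          = if j = i ∧ G.Adj q' q then (1:ℝ) else 0 := by
        intro q
        have hadj : P.Adj (Sum.inr (j, ⟨Sum.inr q', hs⟩))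
            (Sum.inr (i, ⟨Sum.inr q, fun h => Sum.inr_ne_inl h⟩)) ↔ j = i ∧ G.Adj q' q :=
          Iff.rfl
        simp only [adjMat, Matrix.of_apply]
        rw [if_congr hadj rfl rfl]
      simp only [hA]
      by_cases hji : j = i
      · have h1 : ∀ q : W, (if j = i ∧ G.Adj q' q then (1:ℝ) else 0) * w q
            = (if G.Adj q' q then (1:ℝ) else 0) * w q := by
          intro q; simp [hji]
        rw [Finset.sum_congr rfl fun q _ => h1 q]
        have hev' := congrFun hev q'
        rw [mulVec_apply'] at hev'
        have h2 : ∑ q, (if G.Adj q' q then (1:ℝ) else 0) * w q = μ * w q' := by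
          simpa [adjMat] using hev'
        rw [h2]
        have hrhs : (μ • pocketVec (V := V) k w i) (Sum.inr (j, ⟨Sum.inr q', hs⟩)) = μ * w q' := by
          simp [pocketVec, hji.symm]
        rw [hrhs]
      · have h1 : ∀ q : W, (if j = i ∧ G.Adj q' q then (1:ℝ) else 0) * w q = 0 := by
          intro q; simp [hji]
        rw [Finset.sum_congr rfl fun q _ => h1 q]
        have hij' : ¬ i = j := fun h => hji h.symm
        have hrhs : (μ • pocketVec (V := V) k w i) (Sum.inr (j, ⟨Sum.inr q', hs⟩)) = 0 := by
          simp [pocketVec, hij']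
        rw [hrhs]
        exact Finset.sum_const_zero

lemma adjMat_symm {V : Type*} [Fintype V] (G : SimpleGraph V) (i j : V) :
    adjMat ℝ G i j = adjMat ℝ G j i := by
  show (if G.Adj i j then (1:ℝ) else 0) = (if G.Adj j i then (1:ℝ) else 0)
  rw [SimpleGraph.adj_comm]

lemma rowsum_boxProd {α β : Type*} [Fintype α] [Fintype β]
    (G : SimpleGraph α) (H : SimpleGraph β) (a : α) (b : β) :
    ∑ z : α × β, adjMat ℝ (G.boxProd H) (a, b) z
      = (∑ c, adjMat ℝ G a c) + (∑ d, adjMat ℝ H b d) := by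
  rw [Fintype.sum_prod_type]
  have hsw : ∀ (c : α) (d : β), adjMat ℝ (G.boxProd H) (a, b) (c, d)
      = (if G.Adj a c then (1:ℝ) else 0) * (if b = d then (1:ℝ) else 0)
        + (if a = c then (1:ℝ) else 0) * (if H.Adj b d then (1:ℝ) else 0) := by
    intro c d
    rw [boxProd_adj_entry]
    ring
  simp only [hsw, Finset.sum_add_distrib]
  rw [← Finset.sum_mul_sum, ← Finset.sum_mul_sum]
  have e1 : (∑ d, (if b = d then (1:ℝ) else 0)) = 1 := by simp
  have e2 : (∑ c, (if a = c then (1:ℝ) else 0)) = 1 := by simp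
  rw [e1, e2, mul_one, one_mul]
  rfl

lemma rowsum_cycle (p : ℕ) (hp : 3 ≤ p) (a : Fin p) :
    ∑ c, adjMat ℝ (SimpleGraph.cycleGraph p) a c = 2 := by
  obtain ⟨n, rfl⟩ : ∃ n, p = n + 3 := ⟨p - 3, by omega⟩
  rw [rowsum_adj, Finset.sum_const, nsmul_eq_mul, mul_one]
  have h := SimpleGraph.cycleGraph_degree_three_le (n := n) (v := a)
  rw [SimpleGraph.degree, SimpleGraph.neighborFinset_eq_filter] at h
  norm_cast
  convert h using 2
  ext c
  simp

lemma rowsum_top (t : ℕ) (ht : 1 ≤ t) (b : Fin t) :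
    ∑ d, adjMat ℝ (⊤ : SimpleGraph (Fin t)) b d = (t : ℝ) - 1 := by
  have hpt : ∀ d, adjMat ℝ (⊤ : SimpleGraph (Fin t)) b d
      = 1 - (if b = d then (1:ℝ) else 0) := by
    intro d
    by_cases h : b = d <;> simp [adjMat, SimpleGraph.top_adj, h]
  rw [Finset.sum_congr rfl fun d _ => hpt d, Finset.sum_sub_distrib, Finset.sum_const,
    Finset.card_univ, Fintype.card_fin, nsmul_eq_mul, mul_one]
  congr 1
  simp
lemma rowsum_model (p r₁ : ℕ) (hp : 3 ≤ p) (hr₁ : 2 ≤ r₁) (v : Fin p × Fin (r₁ - 1)) :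
    ∑ u, adjMat ℝ ((SimpleGraph.cycleGraph p).boxProd (⊤ : SimpleGraph (Fin (r₁ - 1)))) v u
      = (r₁ : ℝ) := by
  obtain ⟨a, b⟩ := v
  rw [rowsum_boxProd, rowsum_cycle p hp a, rowsum_top (r₁ - 1) (by omega) b]
  have : ((r₁ - 1 : ℕ) : ℝ) = (r₁ : ℝ) - 1 := by
    rw [Nat.cast_sub (by omega : 1 ≤ r₁), Nat.cast_one]
  rw [this]
  ring

lemma model_connected (p r₁ : ℕ) (hp : 3 ≤ p) (hr₁ : 2 ≤ r₁) :
    ((SimpleGraph.cycleGraph p).boxProd (⊤ : SimpleGraph (Fin (r₁ - 1)))).Connected := by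
  have h1 : (SimpleGraph.cycleGraph p).Connected := by
    obtain ⟨n, rfl⟩ : ∃ n, p = n + 1 := ⟨p - 1, by omega⟩
    exact SimpleGraph.cycleGraph_connected
  have : Nonempty (Fin (r₁ - 1)) := ⟨⟨0, by omega⟩⟩
  exact h1.boxProd SimpleGraph.connected_top

lemma count_top_eig_le_one {n : Type*} [Fintype n] [DecidableEq n]
    (G : SimpleGraph n) (hconn : G.Connected) (r : ℝ)
    (hreg : ∀ v, ∑ u, adjMat ℝ G v u = r) :
    Multiset.count r (adjMat ℝ G).charpoly.roots ≤ 1 := by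
  have hA := adjMat_isHermitian G
  rw [hermitian_count_roots hA]
  by_contra hcon
  push_neg at hcon
  obtain ⟨i, hi, j, hj, hij⟩ := Finset.one_lt_card.mp hcon
  have hi' : hA.eigenvalues i = r := (Finset.mem_filter.mp hi).2
  have hj' : hA.eigenvalues j = r := (Finset.mem_filter.mp hj).2
  set fi : n → ℝ := ⇑(hA.eigenvectorBasis i) with hfi
  set fj : n → ℝ := ⇑(hA.eigenvectorBasis j) with hfj
  obtain ⟨ci, hci⟩ := eigen_const_of_reg G hconn r hreg fi
    (by rw [hfi, hA.mulVec_eigenvectorBasis, hi'])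
  obtain ⟨cj, hcj⟩ := eigen_const_of_reg G hconn r hreg fj
    (by rw [hfj, hA.mulVec_eigenvectorBasis, hj'])
  have horth : (inner ℝ (hA.eigenvectorBasis i) (hA.eigenvectorBasis j) : ℝ) = 0 :=
    hA.eigenvectorBasis.orthonormal.2 hij
  have hsum : (inner ℝ (hA.eigenvectorBasis i) (hA.eigenvectorBasis j) : ℝ)
      = ∑ q : n, fi q * fj q := by
    simp [PiLp.inner_apply, hfi, hfj, mul_comm]
  have : Nonempty n := hconn.nonempty
  have hcard : 0 < Fintype.card n := Fintype.card_pos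
  have hci0 : ci ≠ 0 := by
    intro h0
    apply hA.eigenvectorBasis.orthonormal.ne_zero i
    have hf0 : fi = 0 := funext fun q => by rw [hci q, h0]; rfl
    exact (WithLp.ofLp_eq_zero 2).1 hf0
  have hcj0 : cj ≠ 0 := by
    intro h0
    apply hA.eigenvectorBasis.orthonormal.ne_zero j
    have hf0 : fj = 0 := funext fun q => by rw [hcj q, h0]; rfl
    exact (WithLp.ofLp_eq_zero 2).1 hf0
  rw [hsum] at horth
  have hcc : ∑ q : n, fi q * fj q = (Fintype.card n : ℝ) * (ci * cj) := by
    rw [Finset.sum_congr rfl fun q _ => by rw [hci q, hcj q]]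
    rw [Finset.sum_const, Finset.card_univ, nsmul_eq_mul]
  rw [hcc] at horth
  rcases mul_eq_zero.mp horth with h | h
  · exact absurd h (by positivity)
  · rcases mul_eq_zero.mp h with h' | h' <;> [exact hci0 h'; exact hcj0 h']


lemma aSpec_eq {V : Type*} [Fintype V] [DecidableEq V] (G : SimpleGraph V) :
    aSpec G = (adjMat ℝ G).charpoly.roots := by
  unfold aSpec
  congr!

end AuxProofs

set_option maxHeartbeats 2000000

/-- eigenvalues/eigenvectors of `A(G*)` coming from the copies of
`G_p^{r₁} = C_p □ K_{r₁−1}`. -/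
theorem adj_eigenvectors_pocketGraph_cycleCompleteModel
    {V : Type*} [Fintype V] [DecidableEq V]
    (m k p r₁ : ℕ) (hp : 3 ≤ p) (hr₁ : 2 ≤ r₁) (hmp : m - 1 = p * (r₁ - 1))
    (F : SimpleGraph V) (f : Fin k ↪ V) :
    (∀ μ : ℝ,
        μ ∈ (aSpec ((SimpleGraph.cycleGraph p).boxProd
              (⊤ : SimpleGraph (Fin (r₁ - 1))))).erase (r₁ : ℝ) →
        k ≤ Multiset.count μ (aSpec (pocketGraph F
              (sgJoin (⊤ : SimpleGraph Unit)
                ((SimpleGraph.cycleGraph p).boxProd (⊤ : SimpleGraph (Fin (r₁ - 1)))))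
              (Sum.inl ()) f)))
    ∧ (∀ (X : Fin p → ℝ) (Y : Fin (r₁ - 1) → ℝ) (lams lamt : ℝ),
        X ≠ 0 → Y ≠ 0 →
        (adjMat ℝ (SimpleGraph.cycleGraph p)).mulVec X = lams • X →
        (adjMat ℝ (⊤ : SimpleGraph (Fin (r₁ - 1)))).mulVec Y = lamt • Y →
        (¬ ∃ c : ℝ, (fun q : Fin p × Fin (r₁ - 1) => X q.1 * Y q.2) = fun _ => c) →
        ∀ Z : Fin k →
            (V ⊕ (Fin k × {w : Unit ⊕ (Fin p × Fin (r₁ - 1)) // w ≠ Sum.inl ()})) → ℝ,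
          Z = (fun i x =>
            Sum.elim (fun _ => (0 : ℝ))
              (fun jw : Fin k × {w : Unit ⊕ (Fin p × Fin (r₁ - 1)) // w ≠ Sum.inl ()} =>
                if i = jw.1 then
                  Sum.elim (fun _ => (0 : ℝ)) (fun q => X q.1 * Y q.2) jw.2.1
                else 0) x) →
          (∀ i : Fin k,
            (adjMat ℝ (pocketGraph F
                (sgJoin (⊤ : SimpleGraph Unit)
                  ((SimpleGraph.cycleGraph p).boxProd (⊤ : SimpleGraph (Fin (r₁ - 1)))))
                (Sum.inl ()) f)).mulVec (Z i) = (lams + lamt) • Z i)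
          ∧ LinearIndependent ℝ Z) := by
  classical
  set Gm := (SimpleGraph.cycleGraph p).boxProd (⊤ : SimpleGraph (Fin (r₁ - 1))) with hGm
  have hAm := adjMat_isHermitian Gm
  have hreg : ∀ v, ∑ u, adjMat ℝ Gm v u = (r₁ : ℝ) := rowsum_model p r₁ hp hr₁
  have hconn := model_connected p r₁ hp hr₁
  constructor
  · intro μ hμ
    rw [aSpec_eq] at hμ ⊢
    have hcount1 : Multiset.count (r₁ : ℝ) ((adjMat ℝ Gm).charpoly.roots) ≤ 1 :=
      count_top_eig_le_one Gm hconn _ hreg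
    have hne : μ ≠ (r₁ : ℝ) := by
      intro h
      rw [h] at hμ
      have h1 := Multiset.count_pos.mpr hμ
      rw [Multiset.count_erase_self] at h1
      have h2 := hcount1
      omega
    have hmem : μ ∈ (adjMat ℝ Gm).charpoly.roots := Multiset.mem_of_mem_erase hμ
    obtain ⟨i0, hi0⟩ := exists_eigvec_of_mem_roots hAm hmem
    set w : (Fin p × Fin (r₁ - 1)) → ℝ := ⇑(hAm.eigenvectorBasis i0) with hw
    have hev : (adjMat ℝ Gm).mulVec w = μ • w := by
      rw [hw, hAm.mulVec_eigenvectorBasis, hi0]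
    have hw0 : w ≠ 0 := (WithLp.ofLp_eq_zero 2).ne.2 (hAm.eigenvectorBasis.orthonormal.ne_zero i0)
    have hsum : ∑ q, w q = 0 :=
      sum_eq_zero_of_eigen _ (adjMat_symm Gm) (r₁ : ℝ) μ hreg w hev hne
    exact card_le_count_of_eigenvectors
      (adjMat_isHermitian (pocketGraph F (sgJoin (⊤ : SimpleGraph Unit) Gm) (Sum.inl ()) f)) μ
      (pocketVec k w)
      (fun i => pocket_mulVec F Gm f μ w hev hsum i)
      (pocketVec_linearIndependent w hw0)
  · intro X Y lams lamt hX hY hevX hevY hnc Z hZ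
    subst hZ
    set w : (Fin p × Fin (r₁ - 1)) → ℝ := fun q => X q.1 * Y q.2 with hw
    have hev : (adjMat ℝ Gm).mulVec w = (lams + lamt) • w :=
      tensor_eigen _ _ X Y lams lamt hevX hevY
    have hw0 : w ≠ 0 := by
      obtain ⟨q1, h1⟩ := Function.ne_iff.mp hX
      obtain ⟨q2, h2⟩ := Function.ne_iff.mp hY
      intro h
      have h3 := congrFun h (q1, q2)
      exact absurd h3 (mul_ne_zero (by simpa using h1) (by simpa using h2))
    have hsum : ∑ q, w q = 0 := by
      by_cases hcase : lams + lamt = (r₁ : ℝ)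
      · exfalso
        obtain ⟨c, hc⟩ := eigen_const_of_reg Gm hconn (r₁ : ℝ) hreg w (by rw [← hcase]; exact hev)
        exact hnc ⟨c, funext hc⟩
      · exact sum_eq_zero_of_eigen _ (adjMat_symm Gm) (r₁ : ℝ) (lams + lamt) hreg w hev hcase
    refine ⟨fun i => ?_, ?_⟩
    · exact pocket_mulVec F Gm f (lams + lamt) w hev hsum i
    · exact pocketVec_linearIndependent w hw0
end
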